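/- arXiv:1903.01005 — 13 statements merged into one kernel-verified Lean document; each statement's English description precedes it below -/
import Mathlib

section
/- One-step lower bound for m: let t₀ ≥ 0 and suppose m(s) ≥ 0 for all s ∈ [t₀ - τ, t₀] and u(s) ≥ 0 for all s ∈ [t₀ - τ, t₀ + τ]. Then for every t ∈ [t₀, t₀ + τ], m(t) ≥ m(t₀) · exp( -(r/K) ∫_{t₀}^{t} u(s) ds ). -/
theorem stmt_4
    (K r τ : ℝ) (hK : 0 < K) (hr : 0 < r) (hτ : 0 < τ)
    (m p q u : ℝ → ℝ)
    (hmc : Continuous m) (hpc : Continuous p) (hqc : Continuous q) (huc : Continuous u)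
    (hdm : ∀ t : ℝ, 0 ≤ t →
      HasDerivAt m (-(r / K) * m t * u t + 2 * (r / K) * m (t - τ) * u (t - τ)) t)
    (hdp : ∀ t : ℝ, 0 ≤ t →
      HasDerivAt p ((r / K) * m t * u t - (r / K) * m (t - τ) * u (t - τ)) t)
    (hdq : ∀ t : ℝ, 0 ≤ t →
      HasDerivAt q ((r / K) * m t * u t - (r / K) * m (t - τ) * u (t - τ)) t)
    (hdu : ∀ t : ℝ, 0 ≤ t → HasDerivAt u (-(r / K) * m t * u t) t)
    (t₀ : ℝ) (ht₀ : 0 ≤ t₀)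
    (hmnn : ∀ s ∈ Set.Icc (t₀ - τ) t₀, 0 ≤ m s)
    (hunn : ∀ s ∈ Set.Icc (t₀ - τ) (t₀ + τ), 0 ≤ u s)
:
    ∀ t ∈ Set.Icc t₀ (t₀ + τ),
      m t₀ * Real.exp (-(r / K) * ∫ s in t₀..t, u s) ≤ m t := by
  intro t ht
  set c : ℝ := r / K with hc
  have hcpos : 0 < c := div_pos hr hK
  set I : ℝ → ℝ := fun x => ∫ s in t₀..x, u s with hIdef
  have hIderiv : ∀ x : ℝ, HasDerivAt I (u x) x := fun x =>
    intervalIntegral.integral_hasDerivAt_right (huc.intervalIntegrable _ _)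
      (huc.stronglyMeasurableAtFilter _ _) huc.continuousAt
  have hIcont : Continuous I :=
    continuous_iff_continuousAt.mpr fun x => (hIderiv x).continuousAt
  set F : ℝ → ℝ := fun x => m x * Real.exp (c * I x) with hFdef
  have hFcont : Continuous F :=
    hmc.mul (Real.continuous_exp.comp (continuous_const.mul hIcont))
  have hFd : ∀ x ∈ Set.Ioo t₀ (t₀ + τ),
      HasDerivAt F (Real.exp (c * I x) * (2 * c * m (x - τ) * u (x - τ))) x := by
    intro x hx
    have hx0 : (0:ℝ) ≤ x := le_trans ht₀ hx.1.le
    have hexp : HasDerivAt (fun y => Real.exp (c * I y))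
        (Real.exp (c * I x) * (c * u x)) x := ((hIderiv x).const_mul c).exp
    have := (hdm x hx0).fun_mul hexp
    refine this.congr_deriv ?_
    ring
  have hFd_nonneg : ∀ x ∈ Set.Ioo t₀ (t₀ + τ), 0 ≤ deriv F x := by
    intro x hx
    rw [(hFd x hx).deriv]
    have hm : 0 ≤ m (x - τ) := hmnn _ ⟨by linarith [hx.1], by linarith [hx.2]⟩
    have hu : 0 ≤ u (x - τ) := hunn _ ⟨by linarith [hx.1], by linarith [hx.2]⟩
    positivity
  have hmono : MonotoneOn F (Set.Icc t₀ (t₀ + τ)) := by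
    apply monotoneOn_of_deriv_nonneg (convex_Icc _ _) hFcont.continuousOn
    · intro x hx
      rw [interior_Icc] at hx
      exact (hFd x hx).differentiableAt.differentiableWithinAt
    · intro x hx
      rw [interior_Icc] at hx
      exact hFd_nonneg x hx
  have hle : F t₀ ≤ F t :=
    hmono (Set.left_mem_Icc.mpr (by linarith [ht.1, ht.2])) ht ht.1
  have hFt₀ : F t₀ = m t₀ := by
    simp [hFdef, hIdef, intervalIntegral.integral_same]
  have hepos : 0 < Real.exp (-(c * I t)) := Real.exp_pos _
  have : m t₀ * Real.exp (-(c * I t)) ≤ F t * Real.exp (-(c * I t)) := by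
    rw [← hFt₀]
    exact mul_le_mul_of_nonneg_right hle hepos.le
  calc m t₀ * Real.exp (-(r / K) * ∫ s in t₀..t, u s)
      = m t₀ * Real.exp (-(c * I t)) := by rw [hc, hIdef]; ring_nf
    _ ≤ F t * Real.exp (-(c * I t)) := this
    _ = m t := by
        rw [hFdef]
        simp only []
        rw [mul_assoc, ← Real.exp_add]
        simp
end

section
/- Nonnegativity of the motile population: if m(θ) ≥ 0 for all θ ∈ [-τ, 0] and u(s) ≥ 0 for all s ≥ -τ, then m(t) ≥ 0 for all t ≥ 0. -/
theorem stmt_5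
    (K r τ : ℝ) (hK : 0 < K) (hr : 0 < r) (hτ : 0 < τ)
    (m p q u : ℝ → ℝ)
    (hmc : Continuous m) (hpc : Continuous p) (hqc : Continuous q) (huc : Continuous u)
    (hdm : ∀ t : ℝ, 0 ≤ t →
      HasDerivAt m (-(r / K) * m t * u t + 2 * (r / K) * m (t - τ) * u (t - τ)) t)
    (hdp : ∀ t : ℝ, 0 ≤ t →
      HasDerivAt p ((r / K) * m t * u t - (r / K) * m (t - τ) * u (t - τ)) t)
    (hdq : ∀ t : ℝ, 0 ≤ t →
      HasDerivAt q ((r / K) * m t * u t - (r / K) * m (t - τ) * u (t - τ)) t)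
    (hdu : ∀ t : ℝ, 0 ≤ t → HasDerivAt u (-(r / K) * m t * u t) t)
    (hmnn : ∀ θ ∈ Set.Icc (-τ) (0 : ℝ), 0 ≤ m θ)
    (hunn : ∀ s : ℝ, -τ ≤ s → 0 ≤ u s)
:
    ∀ t : ℝ, 0 ≤ t → 0 ≤ m t := by
  set a : ℝ → ℝ := fun s => r / K * u s with ha
  have hac : Continuous a := by continuity
  set A : ℝ → ℝ := fun s => ∫ x in (0:ℝ)..s, a x with hA
  have hdA : ∀ s : ℝ, HasDerivAt A (a s) s := fun s =>
    intervalIntegral.integral_hasDerivAt_right (hac.intervalIntegrable 0 s)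
      hac.aestronglyMeasurable.stronglyMeasurableAtFilter hac.continuousAt
  have hAc : Continuous A := continuous_iff_continuousAt.2 fun s => (hdA s).continuousAt
  set g : ℝ → ℝ := fun s => m s * Real.exp (A s) with hg
  have hgc : Continuous g := by continuity
  have hdg : ∀ s : ℝ, 0 ≤ s →
      HasDerivAt g (Real.exp (A s) * (2 * (r / K) * m (s - τ) * u (s - τ))) s := by
    intro s hs
    have h : HasDerivAt g _ s := (hdm s hs).mul ((hdA s).exp)
    convert h using 1
    simp only [ha]
    ring
  -- key induction
  have key : ∀ n : ℕ, ∀ t : ℝ, -τ ≤ t → t ≤ n * τ → 0 ≤ m t := by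
    intro n
    induction n with
    | zero =>
      intro t ht1 ht2
      exact hmnn t ⟨ht1, by simpa using ht2⟩
    | succ n ih =>
      intro t ht1 ht2
      rcases le_or_gt t 0 with h0 | h0
      · exact hmnn t ⟨ht1, h0⟩
      -- t > 0, t ≤ (n+1)τ
      have hbnn : ∀ x ∈ Set.Icc (0:ℝ) t,
          0 ≤ 2 * (r / K) * m (x - τ) * u (x - τ) := by
        intro x hx
        have hx1 : -τ ≤ x - τ := by linarith [hx.1]
        have hx2 : x - τ ≤ n * τ := by
          have := hx.2
          push_cast at ht2
          linarith
        have hm := ih (x - τ) hx1 hx2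
        have hu := hunn (x - τ) hx1
        positivity
      have hmono : MonotoneOn g (Set.Icc 0 t) := by
        apply monotoneOn_of_deriv_nonneg (convex_Icc 0 t) hgc.continuousOn
        · intro x hx
          rw [interior_Icc] at hx
          exact (hdg x hx.1.le).differentiableAt.differentiableWithinAt
        · intro x hx
          rw [interior_Icc] at hx
          rw [(hdg x hx.1.le).deriv]
          exact mul_nonneg (Real.exp_nonneg _) (hbnn x ⟨hx.1.le, hx.2.le⟩)
      have h0t : g 0 ≤ g t := hmono (Set.left_mem_Icc.2 h0.le) (Set.right_mem_Icc.2 h0.le) h0.le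
      have hg0 : 0 ≤ g 0 := by
        have hm0 : 0 ≤ m 0 := hmnn 0 ⟨by linarith, le_refl 0⟩
        exact mul_nonneg hm0 (Real.exp_nonneg _)
      have : 0 ≤ m t * Real.exp (A t) := le_trans hg0 h0t
      exact nonneg_of_mul_nonneg_left this (Real.exp_pos _)
  intro t ht
  obtain ⟨n, hn⟩ := exists_nat_ge (t / τ)
  have htn : t ≤ n * τ := by
    rw [div_le_iff₀ hτ] at hn
    linarith
  exact key n t (by linarith) htn
end

section
/- Strict positivity of the motile population: under the feasibility conditions, if m(0) > 0 then m(t) > 0 for all t ≥ 0. -/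
open Set

theorem stmt_6
    (K r τ : ℝ) (hK : 0 < K) (hr : 0 < r) (hτ : 0 < τ)
    (m p q u : ℝ → ℝ)
    (hmc : Continuous m) (hpc : Continuous p) (hqc : Continuous q) (huc : Continuous u)
    (hdm : ∀ t : ℝ, 0 ≤ t →
      HasDerivAt m (-(r / K) * m t * u t + 2 * (r / K) * m (t - τ) * u (t - τ)) t)
    (hdp : ∀ t : ℝ, 0 ≤ t →
      HasDerivAt p ((r / K) * m t * u t - (r / K) * m (t - τ) * u (t - τ)) t)
    (hdq : ∀ t : ℝ, 0 ≤ t →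
      HasDerivAt q ((r / K) * m t * u t - (r / K) * m (t - τ) * u (t - τ)) t)
    (hdu : ∀ t : ℝ, 0 ≤ t → HasDerivAt u (-(r / K) * m t * u t) t)
    (hmnn : ∀ θ ∈ Set.Icc (-τ) (0 : ℝ), 0 ≤ m θ)
    (hpnn : ∀ θ ∈ Set.Icc (-τ) (0 : ℝ), 0 ≤ p θ)
    (hqnn : ∀ θ ∈ Set.Icc (-τ) (0 : ℝ), 0 ≤ q θ)
    (hunn : ∀ θ ∈ Set.Icc (-τ) (0 : ℝ), 0 ≤ u θ)
    (hsum : m 0 + p 0 + q 0 + u 0 = K)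
    (hpin : p 0 = (r / K) * ∫ s in (-τ)..(0 : ℝ), m s * u s)
    (hqin : q 0 = (r / K) * ∫ s in (-τ)..(0 : ℝ), m s * u s)
    (hmpos : 0 < m 0)
:
    ∀ t : ℝ, 0 ≤ t → 0 < m t := by
  have hcpos : 0 < r / K := div_pos hr hK
  set c : ℝ := r / K with hc
  have hu0 : 0 ≤ u 0 := hunn 0 ⟨by linarith, le_refl 0⟩
  -- primitive of m
  set A : ℝ → ℝ := fun x => ∫ s in (0:ℝ)..x, m s with hA_def
  have hA : ∀ t : ℝ, HasDerivAt A (m t) t := fun t =>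
    intervalIntegral.integral_hasDerivAt_right (hmc.intervalIntegrable 0 t)
      hmc.aestronglyMeasurable.stronglyMeasurableAtFilter hmc.continuousAt
  set E : ℝ → ℝ := fun x => Real.exp (c * A x) with hE_def
  have hE : ∀ t : ℝ, HasDerivAt E (E t * (c * m t)) t := by
    intro t
    have := (((hA t).const_mul c).exp)
    simpa [hE_def, mul_comm] using this
  have hEpos : ∀ t, 0 < E t := fun t => Real.exp_pos _
  have hE0 : E 0 = 1 := by simp [hE_def, hA_def]
  have hEc : Continuous E := by
    have : Continuous A := by
      have : Differentiable ℝ A := fun t => (hA t).differentiableAt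
      exact this.continuous
    exact Real.continuous_exp.comp (continuous_const.mul this)
  -- u(t) * E(t) is constant on [0, ∞)
  have huE : ∀ t : ℝ, 0 ≤ t → u t * E t = u 0 := by
    intro T hT
    have key := constant_of_has_deriv_right_zero (f := fun x => u x * E x) (a := 0) (b := T)
      ((huc.mul hEc).continuousOn)
      (fun x hx => by
        have hx0 : (0:ℝ) ≤ x := hx.1
        have hd : HasDerivAt (fun x => u x * E x)
            ((-c * m x * u x) * E x + u x * (E x * (c * m x))) x :=
          (hdu x hx0).mul (hE x)
        have heq : (-c * m x * u x) * E x + u x * (E x * (c * m x)) = 0 := by ring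
        rw [heq] at hd
        exact hd.hasDerivWithinAt)
    have := key T ⟨hT, le_refl T⟩
    simpa [hE0] using this
  have hupos : ∀ t : ℝ, 0 ≤ t → 0 ≤ u t := by
    intro t ht
    have h1 := huE t ht
    have h2 : u t = u 0 / E t := by
      field_simp [(hEpos t).ne'] at h1 ⊢
      linarith [h1]
    rw [h2]
    exact div_nonneg hu0 (hEpos t).le
  -- primitive of u
  set B : ℝ → ℝ := fun x => ∫ s in (0:ℝ)..x, u s with hB_def
  have hB : ∀ t : ℝ, HasDerivAt B (u t) t := fun t =>
    intervalIntegral.integral_hasDerivAt_right (huc.intervalIntegrable 0 t)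
      huc.aestronglyMeasurable.stronglyMeasurableAtFilter huc.continuousAt
  set F : ℝ → ℝ := fun x => Real.exp (c * B x) with hF_def
  have hF : ∀ t : ℝ, HasDerivAt F (F t * (c * u t)) t := by
    intro t
    have := (((hB t).const_mul c).exp)
    simpa [hF_def, mul_comm] using this
  have hFpos : ∀ t, 0 < F t := fun t => Real.exp_pos _
  have hF0 : F 0 = 1 := by simp [hF_def, hB_def]
  have hFc : Continuous F := by
    have : Continuous B := by
      have : Differentiable ℝ B := fun t => (hB t).differentiableAt
      exact this.continuous
    exact Real.continuous_exp.comp (continuous_const.mul this)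
  -- key step lemma
  have hkey : ∀ T : ℝ, 0 ≤ T →
      (∀ s : ℝ, 0 ≤ s → s ≤ T → 0 ≤ m (s - τ) * u (s - τ)) → 0 < m T := by
    intro T hT hdel
    rcases eq_or_lt_of_le hT with h | h
    · rwa [← h]
    · set h : ℝ → ℝ := fun x => m x * F x with hh_def
      have hintr : interior (Icc (0:ℝ) T) = Ioo 0 T := interior_Icc
      have hderiv : ∀ x ∈ Ioo (0:ℝ) T,
          HasDerivAt h (F x * (2 * c * (m (x - τ) * u (x - τ)))) x := by
        intro x hx
        have hd : HasDerivAt h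
            ((-c * m x * u x + 2 * c * m (x - τ) * u (x - τ)) * F x
              + m x * (F x * (c * u x))) x :=
          (hdm x hx.1.le).mul (hF x)
        have heq : (-c * m x * u x + 2 * c * m (x - τ) * u (x - τ)) * F x
              + m x * (F x * (c * u x)) = F x * (2 * c * (m (x - τ) * u (x - τ))) := by ring
        rwa [heq] at hd
      have hmono : MonotoneOn h (Icc 0 T) := by
        apply monotoneOn_of_deriv_nonneg (convex_Icc 0 T) ((hmc.mul hFc).continuousOn)
        · rw [hintr]
          intro x hx
          exact (hderiv x hx).differentiableAt.differentiableWithinAt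
        · rw [hintr]
          intro x hx
          change 0 ≤ deriv h x
          rw [(hderiv x hx).deriv]
          exact mul_nonneg (hFpos x).le
            (mul_nonneg (by positivity) (hdel x hx.1.le hx.2.le))
      have hle : h 0 ≤ h T := hmono ⟨le_refl 0, hT⟩ ⟨hT, le_refl T⟩ hT
      have h0 : h 0 = m 0 := by simp [hh_def, hF0]
      rw [h0] at hle
      by_contra hcon
      push_neg at hcon
      have : h T ≤ 0 := mul_nonpos_of_nonpos_of_nonneg hcon (hFpos T).le
      linarith
  -- induction on n : m > 0 on [0, n τ]
  have hind : ∀ n : ℕ, ∀ t : ℝ, 0 ≤ t → t ≤ n * τ → 0 < m t := by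
    intro n
    induction n with
    | zero =>
      intro t ht ht'
      have : t = 0 := le_antisymm (by simpa using ht') ht
      rwa [this]
    | succ n ih =>
      intro t ht ht'
      apply hkey t ht
      intro s hs hst
      rcases le_or_gt (s - τ) 0 with hsτ | hsτ
      · exact mul_nonneg (hmnn _ ⟨by linarith, hsτ⟩) (hunn _ ⟨by linarith, hsτ⟩)
      · have h1 : s - τ ≤ n * τ := by
          have : t ≤ (n + 1) * τ := by push_cast at ht' ⊢; linarith
          linarith
        exact mul_nonneg (ih _ hsτ.le h1).le (hupos _ hsτ.le)
  intro t ht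
  obtain ⟨n, hn⟩ := exists_nat_ge (t / τ)
  have : t ≤ n * τ := by
    rw [div_le_iff₀ hτ] at hn
    linarith
  exact hind n t ht this
end

section
/- (Lemma 1, forward invariance of the feasible set) Under the feasibility conditions, for every t ≥ 0 the following hold: m(t) ≥ 0, p(t) ≥ 0, q(t) ≥ 0, u(t) ≥ 0; m(t) + p(t) + q(t) + u(t) = K; and p(t) = q(t) = (r/K) ∫_{t-τ}^{t} m(s)u(s) ds. -/
theorem stmt_7
    (K r τ : ℝ) (hK : 0 < K) (hr : 0 < r) (hτ : 0 < τ)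
    (m p q u : ℝ → ℝ)
    (hmc : Continuous m) (hpc : Continuous p) (hqc : Continuous q) (huc : Continuous u)
    (hdm : ∀ t : ℝ, 0 ≤ t →
      HasDerivAt m (-(r / K) * m t * u t + 2 * (r / K) * m (t - τ) * u (t - τ)) t)
    (hdp : ∀ t : ℝ, 0 ≤ t →
      HasDerivAt p ((r / K) * m t * u t - (r / K) * m (t - τ) * u (t - τ)) t)
    (hdq : ∀ t : ℝ, 0 ≤ t →
      HasDerivAt q ((r / K) * m t * u t - (r / K) * m (t - τ) * u (t - τ)) t)
    (hdu : ∀ t : ℝ, 0 ≤ t → HasDerivAt u (-(r / K) * m t * u t) t)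
    (hmnn : ∀ θ ∈ Set.Icc (-τ) (0 : ℝ), 0 ≤ m θ)
    (hpnn : ∀ θ ∈ Set.Icc (-τ) (0 : ℝ), 0 ≤ p θ)
    (hqnn : ∀ θ ∈ Set.Icc (-τ) (0 : ℝ), 0 ≤ q θ)
    (hunn : ∀ θ ∈ Set.Icc (-τ) (0 : ℝ), 0 ≤ u θ)
    (hsum : m 0 + p 0 + q 0 + u 0 = K)
    (hpin : p 0 = (r / K) * ∫ s in (-τ)..(0 : ℝ), m s * u s)
    (hqin : q 0 = (r / K) * ∫ s in (-τ)..(0 : ℝ), m s * u s)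
:
    ∀ t : ℝ, 0 ≤ t →
      (0 ≤ m t ∧ 0 ≤ p t ∧ 0 ≤ q t ∧ 0 ≤ u t) ∧
      m t + p t + q t + u t = K ∧
      p t = (r / K) * (∫ s in (t - τ)..t, m s * u s) ∧
      q t = (r / K) * ∫ s in (t - τ)..t, m s * u s := by
  have hcpos : 0 < r / K := div_pos hr hK
  set c := r / K with hc
  -- primitives of continuous functions
  have prim : ∀ (f : ℝ → ℝ), Continuous f →
      ∀ t : ℝ, HasDerivAt (fun s => ∫ x in (0:ℝ)..s, f x) (f t) t :=
    fun f hf t => (hf.integral_hasStrictDerivAt 0 t).hasDerivAt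
  have primc : ∀ (f : ℝ → ℝ), Continuous f →
      Continuous (fun s => ∫ x in (0:ℝ)..s, f x) := by
    intro f hf
    exact continuous_iff_continuousAt.2 fun t => (prim f hf t).differentiableAt.continuousAt
  -- u nonneg for t ≥ 0
  have hu0 : ∀ t : ℝ, 0 ≤ t → 0 ≤ u t := by
    intro t ht
    set M := fun s => ∫ x in (0:ℝ)..s, m x with hM
    have hMd : ∀ s : ℝ, HasDerivAt M (m s) s := prim m hmc
    set h := fun s => u s * Real.exp (c * M s) with hh
    have hhd : ∀ s ∈ Set.Ico (0:ℝ) t, HasDerivWithinAt h 0 (Set.Ici s) s := by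
      intro s hs
      have hd : HasDerivAt h (-c * m s * u s * Real.exp (c * M s)
          + u s * (Real.exp (c * M s) * (c * m s))) s :=
        (hdu s hs.1).mul (((hMd s).const_mul c).exp)
      have : HasDerivAt h 0 s := by
        convert hd using 1; ring
      exact this.hasDerivWithinAt
    have hhc : Continuous h :=
      huc.mul (Real.continuous_exp.comp (continuous_const.mul (primc m hmc)))
    have := constant_of_has_deriv_right_zero (hhc.continuousOn (s := Set.Icc 0 t)) hhd t
      ⟨ht, le_rfl⟩
    have h0 : h 0 = u 0 := by
      simp [hh, hM, intervalIntegral.integral_same]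
    have hu0nn : 0 ≤ u 0 := hunn 0 ⟨by linarith, le_rfl⟩
    have h2 : (0:ℝ) ≤ h t := by rw [this, h0]; exact hu0nn
    have : 0 ≤ u t * Real.exp (c * M t) := h2
    nlinarith [Real.exp_pos (c * M t)]
  have huτ : ∀ s : ℝ, -τ ≤ s → 0 ≤ u s := by
    intro s hs
    rcases le_or_gt 0 s with h | h
    · exact hu0 s h
    · exact hunn s ⟨hs, h.le⟩
  -- m nonneg by method of steps
  set U := fun s => ∫ x in (0:ℝ)..s, u x with hU
  have hUd : ∀ s : ℝ, HasDerivAt U (u s) s := prim u huc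
  have hUc : Continuous U := primc u huc
  have hm0 : ∀ t : ℝ, 0 ≤ t → 0 ≤ m t := by
    have key : ∀ n : ℕ, ∀ t : ℝ, 0 ≤ t → t ≤ n * τ → 0 ≤ m t := by
      intro n
      induction n with
      | zero =>
        intro t ht ht'
        simp only [Nat.cast_zero, zero_mul] at ht'
        have : t = 0 := le_antisymm ht' ht
        rw [this]; exact hmnn 0 ⟨by linarith, le_rfl⟩
      | succ n ih =>
        intro t ht ht'
        set g := fun s => m s * Real.exp (c * U s) with hg
        set g' := fun s => (2 * c * m (s - τ) * u (s - τ)) * Real.exp (c * U s) with hg'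
        have hgc : Continuous g :=
          hmc.mul (Real.continuous_exp.comp (continuous_const.mul hUc))
        have hmono : MonotoneOn g (Set.Icc 0 t) := by
          apply monotoneOn_of_hasDerivWithinAt_nonneg (convex_Icc 0 t) hgc.continuousOn
            (f' := g')
          · intro x hx
            rw [interior_Icc] at hx
            have hx0 : (0:ℝ) ≤ x := hx.1.le
            have hd : HasDerivAt g ((-c * m x * u x + 2 * c * m (x - τ) * u (x - τ))
                * Real.exp (c * U x) + m x * (Real.exp (c * U x) * (c * u x))) x :=
              (hdm x hx0).mul (((hUd x).const_mul c).exp)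
            have : HasDerivAt g (g' x) x := by
              convert hd using 1; rw [hg']; ring
            exact this.hasDerivWithinAt
          · intro x hx
            rw [interior_Icc] at hx
            have hmnn' : 0 ≤ m (x - τ) := by
              rcases le_or_gt 0 (x - τ) with h | h
              · refine ih (x - τ) h ?_
                have : x ≤ t := hx.2.le
                push_cast at ht' ⊢
                linarith
              · exact hmnn (x - τ) ⟨by linarith [hx.1], h.le⟩
            have hunn' : 0 ≤ u (x - τ) := huτ (x - τ) (by linarith [hx.1])
            rw [hg']
            have h2c : (0:ℝ) ≤ 2 * c := by positivity
            exact mul_nonneg (mul_nonneg (mul_nonneg h2c hmnn') hunn') (Real.exp_pos _).le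
        have hle : g 0 ≤ g t := hmono ⟨le_rfl, ht⟩ ⟨ht, le_rfl⟩ ht
        have hg0 : g 0 = m 0 := by simp [hg, hU, intervalIntegral.integral_same]
        have hm00 : 0 ≤ m 0 := hmnn 0 ⟨by linarith, le_rfl⟩
        have h2 : (0:ℝ) ≤ g t := by rw [hg0] at hle; linarith
        have : 0 ≤ m t * Real.exp (c * U t) := h2
        nlinarith [Real.exp_pos (c * U t)]
    intro t ht
    obtain ⟨n, hn⟩ := exists_nat_gt (t / τ)
    refine key n t ht ?_
    have := (div_lt_iff₀ hτ).1 hn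
    linarith
  have hmτ : ∀ s : ℝ, -τ ≤ s → 0 ≤ m s := by
    intro s hs
    rcases le_or_gt 0 s with h | h
    · exact hm0 s h
    · exact hmnn s ⟨hs, h.le⟩
  -- sum conservation
  have hsumt : ∀ t : ℝ, 0 ≤ t → m t + p t + q t + u t = K := by
    intro t ht
    set S := fun s => m s + p s + q s + u s with hS
    have hSd : ∀ s ∈ Set.Ico (0:ℝ) t, HasDerivWithinAt S 0 (Set.Ici s) s := by
      intro s hs
      have hd := (((hdm s hs.1).add (hdp s hs.1)).add (hdq s hs.1)).add (hdu s hs.1)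
      have : HasDerivAt S 0 s := by exact hd.congr_deriv (by ring)
      exact this.hasDerivWithinAt
    have hSc : Continuous S := ((hmc.add hpc).add hqc).add huc
    have := constant_of_has_deriv_right_zero (hSc.continuousOn (s := Set.Icc 0 t)) hSd t
      ⟨ht, le_rfl⟩
    calc m t + p t + q t + u t = S t := rfl
      _ = S 0 := this
      _ = K := hsum
  -- integral representation
  set G := fun s => ∫ x in (0:ℝ)..s, m x * u x with hG
  have hGd : ∀ s : ℝ, HasDerivAt G (m s * u s) s := prim _ (hmc.mul huc)
  have hGc : Continuous G := primc _ (hmc.mul huc)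
  have hGτd : ∀ s : ℝ, HasDerivAt (fun x => G (x - τ)) (m (s - τ) * u (s - τ)) s := by
    intro s
    have := (hGd (s - τ)).comp s ((hasDerivAt_id s).sub_const τ)
    exact this.congr_deriv (mul_one _)
  have hGval : ∀ t : ℝ, G t - G (t - τ) = ∫ s in (t - τ)..t, m s * u s := by
    intro t
    rw [hG]
    rw [← intervalIntegral.integral_interval_sub_left
      (f := fun x => m x * u x) ((hmc.mul huc).intervalIntegrable 0 t) ((hmc.mul huc).intervalIntegrable 0 (t - τ))]
  have hG0 : G 0 - G (0 - τ) = ∫ s in (-τ)..(0:ℝ), m s * u s := by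
    have := hGval 0
    simpa using this
  have hrep : ∀ (f : ℝ → ℝ), Continuous f →
      (∀ t : ℝ, 0 ≤ t → HasDerivAt f (c * m t * u t - c * m (t - τ) * u (t - τ)) t) →
      f 0 = c * ∫ s in (-τ)..(0:ℝ), m s * u s →
      ∀ t : ℝ, 0 ≤ t → f t = c * ∫ s in (t - τ)..t, m s * u s := by
    intro f hfc hfd hf0 t ht
    set F := fun s => f s - c * (G s - G (s - τ)) with hF
    have hFd : ∀ s ∈ Set.Ico (0:ℝ) t, HasDerivWithinAt F 0 (Set.Ici s) s := by
      intro s hs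
      have hd := (hfd s hs.1).sub (((hGd s).sub (hGτd s)).const_mul c)
      have : HasDerivAt F 0 s := by exact hd.congr_deriv (by ring)
      exact this.hasDerivWithinAt
    have hFc : Continuous F :=
      hfc.sub (continuous_const.mul (hGc.sub (hGc.comp (continuous_id.sub continuous_const))))
    have hconst := constant_of_has_deriv_right_zero (hFc.continuousOn (s := Set.Icc 0 t)) hFd t
      ⟨ht, le_rfl⟩
    have hF0 : F 0 = 0 := by
      rw [hF]
      simp only
      rw [hG0, hf0]
      ring
    have : F t = 0 := by rw [hconst, hF0]
    rw [hF] at this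
    simp only at this
    rw [hGval t] at this
    linarith
  have hp := hrep p hpc hdp hpin
  have hq := hrep q hqc hdq hqin
  -- assemble
  intro t ht
  have hint : 0 ≤ ∫ s in (t - τ)..t, m s * u s := by
    apply intervalIntegral.integral_nonneg (by linarith)
    intro x hx
    exact mul_nonneg (hmτ x (by linarith [hx.1])) (huτ x (by linarith [hx.1]))
  refine ⟨⟨hm0 t ht, ?_, ?_, hu0 t ht⟩, hsumt t ht, hp t ht, hq t ht⟩
  · rw [hp t ht]; positivity
  · rw [hq t ht]; positivity
end

section
/- Uniform boundedness of feasible solutions: under the feasibility conditions, for every t ≥ 0 each of m(t), p(t), q(t), u(t) lies in the interval [0, K]. -/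
open intervalIntegral MeasureTheory Set

lemma myFTC {f : ℝ → ℝ} (hc : Continuous f) (a t : ℝ) :
    HasDerivAt (fun x => ∫ s in a..x, f s) (f t) t :=
  intervalIntegral.integral_hasDerivAt_right (hc.intervalIntegrable a t)
    (hc.aestronglyMeasurable.stronglyMeasurableAtFilter) hc.continuousAt

lemma myConst {f : ℝ → ℝ} (hc : Continuous f)
    (hd : ∀ t : ℝ, 0 ≤ t → HasDerivAt f 0 t) : ∀ t : ℝ, 0 ≤ t → f t = f 0 := by
  intro t ht
  exact constant_of_has_deriv_right_zero (hc.continuousOn)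
    (fun x hx => (hd x hx.1).hasDerivWithinAt) t ⟨ht, le_rfl⟩

lemma myShift {f : ℝ → ℝ} (hc : Continuous f) (a τ t : ℝ) :
    HasDerivAt (fun x => ∫ s in a..(x - τ), f s) (f (t - τ)) t := by
  have h1 := myFTC hc a (t - τ)
  have h2 : HasDerivAt (fun x : ℝ => x - τ) 1 t := (hasDerivAt_id t).sub_const τ
  simpa [Function.comp_def] using h1.comp t h2

theorem stmt_8
    (K r τ : ℝ) (hK : 0 < K) (hr : 0 < r) (hτ : 0 < τ)
    (m p q u : ℝ → ℝ)
    (hmc : Continuous m) (hpc : Continuous p) (hqc : Continuous q) (huc : Continuous u)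
    (hdm : ∀ t : ℝ, 0 ≤ t →
      HasDerivAt m (-(r / K) * m t * u t + 2 * (r / K) * m (t - τ) * u (t - τ)) t)
    (hdp : ∀ t : ℝ, 0 ≤ t →
      HasDerivAt p ((r / K) * m t * u t - (r / K) * m (t - τ) * u (t - τ)) t)
    (hdq : ∀ t : ℝ, 0 ≤ t →
      HasDerivAt q ((r / K) * m t * u t - (r / K) * m (t - τ) * u (t - τ)) t)
    (hdu : ∀ t : ℝ, 0 ≤ t → HasDerivAt u (-(r / K) * m t * u t) t)
    (hmnn : ∀ θ ∈ Set.Icc (-τ) (0 : ℝ), 0 ≤ m θ)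
    (hpnn : ∀ θ ∈ Set.Icc (-τ) (0 : ℝ), 0 ≤ p θ)
    (hqnn : ∀ θ ∈ Set.Icc (-τ) (0 : ℝ), 0 ≤ q θ)
    (hunn : ∀ θ ∈ Set.Icc (-τ) (0 : ℝ), 0 ≤ u θ)
    (hsum : m 0 + p 0 + q 0 + u 0 = K)
    (hpin : p 0 = (r / K) * ∫ s in (-τ)..(0 : ℝ), m s * u s)
    (hqin : q 0 = (r / K) * ∫ s in (-τ)..(0 : ℝ), m s * u s)
:
    ∀ t : ℝ, 0 ≤ t →
      m t ∈ Set.Icc (0 : ℝ) K ∧ p t ∈ Set.Icc (0 : ℝ) K ∧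
      q t ∈ Set.Icc (0 : ℝ) K ∧ u t ∈ Set.Icc (0 : ℝ) K := by
  set a : ℝ := r / K with ha
  have hapos : 0 < a := div_pos hr hK
  have hτ0 : -τ ≤ 0 := neg_nonpos.2 hτ.le
  -- continuity of primitives
  have hImC : Continuous (fun t : ℝ => ∫ s in (0:ℝ)..t, m s) :=
    continuous_iff_continuousAt.2 fun t => (myFTC hmc 0 t).continuousAt
  have hIuC : Continuous (fun t : ℝ => ∫ s in (0:ℝ)..t, u s) :=
    continuous_iff_continuousAt.2 fun t => (myFTC huc 0 t).continuousAt
  -- Step 1: u ≥ 0 on [0, ∞)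
  have hu0 : ∀ t : ℝ, 0 ≤ t → 0 ≤ u t := by
    set E : ℝ → ℝ := fun t => Real.exp (a * ∫ s in (0:ℝ)..t, m s) with hE
    have hEpos : ∀ t, 0 < E t := fun t => Real.exp_pos _
    have hEd : ∀ t : ℝ, HasDerivAt E (E t * (a * m t)) t := fun t =>
      (((myFTC hmc 0 t).const_mul a).exp)
    have hEC : Continuous E := Real.continuous_exp.comp (continuous_const.mul hImC)
    have hvd : ∀ t : ℝ, 0 ≤ t → HasDerivAt (fun t => u t * E t) 0 t := by
      intro t ht
      have := (hdu t ht).mul (hEd t)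
      refine this.congr_deriv ?_
      ring
    have hvc := myConst (huc.mul hEC) hvd
    intro t ht
    have h0 : u 0 * E 0 = u 0 := by
      simp [hE]
    have := hvc t ht
    rw [Pi.mul_apply, Pi.mul_apply, h0] at this
    have hu00 : 0 ≤ u 0 := hunn 0 ⟨hτ0, le_rfl⟩
    nlinarith [hEpos t]
  have unn : ∀ s : ℝ, -τ ≤ s → 0 ≤ u s := by
    intro s hs
    rcases le_or_gt s 0 with h | h
    · exact hunn s ⟨hs, h⟩
    · exact hu0 s h.le
  -- Step 2: m ≥ 0 on [-τ, ∞)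
  have mnn : ∀ s : ℝ, -τ ≤ s → 0 ≤ m s := by
    set E : ℝ → ℝ := fun t => Real.exp (a * ∫ s in (0:ℝ)..t, u s) with hE
    have hEpos : ∀ t, 0 < E t := fun t => Real.exp_pos _
    have hEd : ∀ t : ℝ, HasDerivAt E (E t * (a * u t)) t := fun t =>
      (((myFTC huc 0 t).const_mul a).exp)
    have hEC : Continuous E := Real.continuous_exp.comp (continuous_const.mul hIuC)
    set F : ℝ → ℝ := fun t => m t * E t with hF
    have hFC : Continuous F := hmc.mul hEC
    have hFd : ∀ t : ℝ, 0 ≤ t →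
        HasDerivAt F (2 * a * m (t - τ) * u (t - τ) * E t) t := by
      intro t ht
      have := (hdm t ht).mul (hEd t)
      refine this.congr_deriv ?_
      ring
    have key : ∀ n : ℕ, ∀ s : ℝ, -τ ≤ s → s ≤ n * τ → 0 ≤ m s := by
      intro n
      induction n with
      | zero => intro s h1 h2; exact hmnn s ⟨h1, by simpa using h2⟩
      | succ n ih =>
        intro s h1 h2
        rcases le_or_gt s 0 with hs0 | hs0
        · exact hmnn s ⟨h1, hs0⟩
        have hmono : MonotoneOn F (Icc 0 s) := by
          apply monotoneOn_of_deriv_nonneg (convex_Icc 0 s) hFC.continuousOn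
          · intro x hx
            rw [interior_Icc] at hx
            exact (hFd x hx.1.le).differentiableAt.differentiableWithinAt
          · intro x hx
            rw [interior_Icc] at hx
            rw [(hFd x hx.1.le).deriv]
            have hm : 0 ≤ m (x - τ) := by
              apply ih
              · linarith [hx.1]
              · have : x ≤ (n + 1 : ℕ) * τ := le_trans hx.2.le h2
                push_cast at this ⊢
                linarith
            have hu : 0 ≤ u (x - τ) := unn _ (by linarith [hx.1])
            have := (hEpos x).le
            positivity
        have h00 : F 0 ≤ F s := hmono ⟨le_rfl, hs0.le⟩ ⟨hs0.le, le_rfl⟩ hs0.le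
        have hF0 : F 0 = m 0 := by simp [hF, hE]
        have hm0 : 0 ≤ m 0 := hmnn 0 ⟨hτ0, le_rfl⟩
        have hFs : 0 ≤ F s := le_trans (by rw [hF0]; exact hm0) h00
        have : 0 ≤ m s * E s := hFs
        nlinarith [hEpos s]
    intro s hs
    obtain ⟨n, hn⟩ := exists_nat_ge (s / τ)
    exact key n s hs (by rw [div_le_iff₀ hτ] at hn; linarith)
  -- f = m * u is nonneg on [-τ, ∞)
  set f : ℝ → ℝ := fun s => m s * u s with hf
  have hfc : Continuous f := hmc.mul huc
  have fnn : ∀ s : ℝ, -τ ≤ s → 0 ≤ f s := fun s hs => mul_nonneg (mnn s hs) (unn s hs)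
  -- Step 3: p and q equal a * ∫_{t-τ}^t f  for t ≥ 0
  have integral_formula : ∀ (g : ℝ → ℝ), Continuous g →
      (∀ t : ℝ, 0 ≤ t → HasDerivAt g (a * f t - a * f (t - τ)) t) →
      g 0 = a * ∫ s in (-τ)..(0:ℝ), f s →
      ∀ t : ℝ, 0 ≤ t → g t = a * ∫ s in (t - τ)..t, f s := by
    intro g hgc hgd hg0 t ht
    set H : ℝ → ℝ := fun t => g t - a * (∫ s in (0:ℝ)..t, f s)
      + a * (∫ s in (-τ)..(t - τ), f s) with hH
    have hHc : Continuous H := by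
      apply Continuous.add (hgc.sub (continuous_const.mul
        (continuous_iff_continuousAt.2 fun t => (myFTC hfc 0 t).continuousAt)))
      exact continuous_const.mul (continuous_iff_continuousAt.2 fun t =>
        (myShift hfc (-τ) τ t).continuousAt)
    have hHd : ∀ t : ℝ, 0 ≤ t → HasDerivAt H 0 t := by
      intro t ht
      have := ((hgd t ht).sub ((myFTC hfc 0 t).const_mul a)).add
        ((myShift hfc (-τ) τ t).const_mul a)
      refine this.congr_deriv ?_
      ring
    have hHt := myConst hHc hHd t ht
    have hH0 : H 0 = g 0 := by
      simp [hH]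
    rw [hH0, hg0] at hHt
    -- combine integrals
    have hadd1 : (∫ s in (-τ)..(t - τ), f s) + (∫ s in (t - τ)..t, f s)
        = ∫ s in (-τ)..t, f s :=
      intervalIntegral.integral_add_adjacent_intervals (hfc.intervalIntegrable _ _)
        (hfc.intervalIntegrable _ _)
    have hadd2 : (∫ s in (-τ)..(0:ℝ), f s) + (∫ s in (0:ℝ)..t, f s)
        = ∫ s in (-τ)..t, f s :=
      intervalIntegral.integral_add_adjacent_intervals (hfc.intervalIntegrable _ _)
        (hfc.intervalIntegrable _ _)
    simp only [hH] at hHt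
    nlinarith [hadd1, hadd2, hHt]
  have hptf := integral_formula p hpc (fun t ht => by
    have := hdp t ht; convert this using 1; simp [hf]; ring) hpin
  have hqtf := integral_formula q hqc (fun t ht => by
    have := hdq t ht; convert this using 1; simp [hf]; ring) hqin
  have pqnn : ∀ t : ℝ, 0 ≤ t → 0 ≤ a * ∫ s in (t - τ)..t, f s := by
    intro t ht
    apply mul_nonneg hapos.le
    apply intervalIntegral.integral_nonneg (by linarith)
    intro x hx
    exact fnn x (by rcases hx with ⟨h1, _⟩; linarith)
  -- Step 4: conservation of total
  have hW : ∀ t : ℝ, 0 ≤ t → m t + p t + q t + u t = K := by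
    have hWd : ∀ t : ℝ, 0 ≤ t →
        HasDerivAt (fun t => m t + p t + q t + u t) 0 t := by
      intro t ht
      have := (((hdm t ht).add (hdp t ht)).add (hdq t ht)).add (hdu t ht)
      refine this.congr_deriv ?_
      ring
    intro t ht
    have := myConst (((hmc.add hpc).add hqc).add huc) hWd t ht
    simpa [hsum] using this
  -- conclude
  intro t ht
  have hmt : 0 ≤ m t := mnn t (by linarith)
  have hut : 0 ≤ u t := hu0 t ht
  have hpt : 0 ≤ p t := by rw [hptf t ht]; exact pqnn t ht
  have hqt : 0 ≤ q t := by rw [hqtf t ht]; exact pqnn t ht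
  have hs := hW t ht
  exact ⟨⟨hmt, by linarith⟩, ⟨hpt, by linarith⟩, ⟨hqt, by linarith⟩, ⟨hut, by linarith⟩⟩
end

section
/- Monotonicity of the empty-site count (Lyapunov property of V(φ) = φ₄(0)): under the feasibility conditions, u is nonincreasing on [0, ∞), and consequently the total cell count m(t) + p(t) + q(t) is nondecreasing on [0, ∞) and satisfies m(t) + p(t) + q(t) ≥ K - u(0) for all t ≥ 0. -/
theorem stmt_9
    (K r τ : ℝ) (hK : 0 < K) (hr : 0 < r) (hτ : 0 < τ)
    (m p q u : ℝ → ℝ)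
    (hmc : Continuous m) (hpc : Continuous p) (hqc : Continuous q) (huc : Continuous u)
    (hdm : ∀ t : ℝ, 0 ≤ t →
      HasDerivAt m (-(r / K) * m t * u t + 2 * (r / K) * m (t - τ) * u (t - τ)) t)
    (hdp : ∀ t : ℝ, 0 ≤ t →
      HasDerivAt p ((r / K) * m t * u t - (r / K) * m (t - τ) * u (t - τ)) t)
    (hdq : ∀ t : ℝ, 0 ≤ t →
      HasDerivAt q ((r / K) * m t * u t - (r / K) * m (t - τ) * u (t - τ)) t)
    (hdu : ∀ t : ℝ, 0 ≤ t → HasDerivAt u (-(r / K) * m t * u t) t)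
    (hmnn : ∀ θ ∈ Set.Icc (-τ) (0 : ℝ), 0 ≤ m θ)
    (hpnn : ∀ θ ∈ Set.Icc (-τ) (0 : ℝ), 0 ≤ p θ)
    (hqnn : ∀ θ ∈ Set.Icc (-τ) (0 : ℝ), 0 ≤ q θ)
    (hunn : ∀ θ ∈ Set.Icc (-τ) (0 : ℝ), 0 ≤ u θ)
    (hsum : m 0 + p 0 + q 0 + u 0 = K)
    (hpin : p 0 = (r / K) * ∫ s in (-τ)..(0 : ℝ), m s * u s)
    (hqin : q 0 = (r / K) * ∫ s in (-τ)..(0 : ℝ), m s * u s)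
:
    AntitoneOn u (Set.Ici (0 : ℝ)) ∧
    MonotoneOn (fun t => m t + p t + q t) (Set.Ici (0 : ℝ)) ∧
    ∀ t : ℝ, 0 ≤ t → K - u 0 ≤ m t + p t + q t := by
  have hc : 0 < r / K := div_pos hr hK
  -- integral of c*m and c*u
  have hcm : Continuous fun s => (r / K) * m s := continuous_const.mul hmc
  have hcu : Continuous fun s => (r / K) * u s := continuous_const.mul huc
  set F : ℝ → ℝ := fun x => ∫ s in (0:ℝ)..x, (r / K) * m s with hFdef
  set G : ℝ → ℝ := fun x => ∫ s in (0:ℝ)..x, (r / K) * u s with hGdef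
  have hFd : ∀ t : ℝ, HasDerivAt F ((r / K) * m t) t := fun t =>
    intervalIntegral.integral_hasDerivAt_right (hcm.intervalIntegrable 0 t)
      (hcm.stronglyMeasurableAtFilter _ _) hcm.continuousAt
  have hGd : ∀ t : ℝ, HasDerivAt G ((r / K) * u t) t := fun t =>
    intervalIntegral.integral_hasDerivAt_right (hcu.intervalIntegrable 0 t)
      (hcu.stronglyMeasurableAtFilter _ _) hcu.continuousAt
  -- u is nonnegative on [0, ∞)
  have hu0 : 0 ≤ u 0 := hunn 0 ⟨by linarith, le_refl 0⟩
  have hwd : ∀ t : ℝ, 0 ≤ t → HasDerivAt (fun x => u x * Real.exp (F x)) 0 t := by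
    intro t ht
    have h := (hdu t ht).mul ((hFd t).exp)
    exact h.congr_deriv (by ring)
  have hwmono : MonotoneOn (fun x => u x * Real.exp (F x)) (Set.Ici (0:ℝ)) := by
    apply monotoneOn_of_deriv_nonneg (convex_Ici 0)
    · have hFcont : Continuous F :=
        Differentiable.continuous (fun t => (hFd t).differentiableAt)
      exact (huc.mul (Real.continuous_exp.comp hFcont)).continuousOn
    · intro x hx
      rw [interior_Ici] at hx
      exact ((hwd x (le_of_lt hx)).differentiableAt).differentiableWithinAt
    · intro x hx
      rw [interior_Ici] at hx
      rw [(hwd x (le_of_lt hx)).deriv]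
  have hunneg : ∀ t : ℝ, 0 ≤ t → 0 ≤ u t := by
    intro t ht
    have h := hwmono (Set.self_mem_Ici) (Set.mem_Ici.mpr ht) ht
    simp only [hFdef, intervalIntegral.integral_same, Real.exp_zero, mul_one] at h
    have hep := Real.exp_pos (F t)
    nlinarith
  have hunneg' : ∀ t : ℝ, -τ ≤ t → 0 ≤ u t := by
    intro t ht
    rcases le_or_gt t 0 with h | h
    · exact hunn t ⟨ht, h⟩
    · exact hunneg t h.le
  -- m is nonnegative on [-τ, ∞) by step induction
  have hmstep : ∀ n : ℕ, ∀ t : ℝ, -τ ≤ t → t ≤ n * τ → 0 ≤ m t := by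
    intro n
    induction n with
    | zero =>
      intro t ht1 ht2
      exact hmnn t ⟨ht1, by simpa using ht2⟩
    | succ n ih =>
      intro t ht1 ht2
      rcases le_or_gt t ((n : ℝ) * τ) with hcase | hcase
      · exact ih t ht1 hcase
      have hnt : (0:ℝ) ≤ (n : ℝ) * τ := by positivity
      -- g = m * exp(G) is monotone on [nτ, (n+1)τ]
      have hgd : ∀ x : ℝ, 0 ≤ x →
          HasDerivAt (fun y => m y * Real.exp (G y))
            (2 * (r / K) * m (x - τ) * u (x - τ) * Real.exp (G x)) x := by
        intro x hx
        have h := (hdm x hx).mul ((hGd x).exp)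
        exact h.congr_deriv (by ring)
      have hgmono : MonotoneOn (fun y => m y * Real.exp (G y))
          (Set.Icc ((n : ℝ) * τ) (((n : ℝ) + 1) * τ)) := by
        apply monotoneOn_of_deriv_nonneg (convex_Icc _ _)
        · have hGcont : Continuous G :=
            Differentiable.continuous (fun x => (hGd x).differentiableAt)
          exact (hmc.mul (Real.continuous_exp.comp hGcont)).continuousOn
        · intro x hx
          rw [interior_Icc] at hx
          have hx0 : 0 ≤ x := le_trans hnt hx.1.le
          exact ((hgd x hx0).differentiableAt).differentiableWithinAt
        · intro x hx
          rw [interior_Icc] at hx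
          have hx0 : 0 ≤ x := le_trans hnt hx.1.le
          rw [(hgd x hx0).deriv]
          have hm1 : 0 ≤ m (x - τ) := by
            apply ih
            · linarith [hx.1]
            · linarith [hx.2]
          have hu1 : 0 ≤ u (x - τ) := hunneg' (x - τ) (by linarith [hx.1])
          have := (Real.exp_pos (G x)).le
          positivity
      have hmem1 : (n : ℝ) * τ ∈ Set.Icc ((n : ℝ) * τ) (((n : ℝ) + 1) * τ) :=
        ⟨le_refl _, by nlinarith⟩
      have hmem2 : t ∈ Set.Icc ((n : ℝ) * τ) (((n : ℝ) + 1) * τ) := by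
        constructor
        · exact hcase.le
        · push_cast at ht2; linarith
      have h := hgmono hmem1 hmem2 hcase.le
      have hm0 : 0 ≤ m ((n : ℝ) * τ) := ih _ (by linarith) (le_refl _)
      have he1 := Real.exp_pos (G ((n : ℝ) * τ))
      have he2 := Real.exp_pos (G t)
      simp only at h
      have hmt : 0 ≤ m t * Real.exp (G t) := le_trans (mul_nonneg hm0 he1.le) h
      nlinarith [mul_pos he2 he2]
  have hmnneg : ∀ t : ℝ, 0 ≤ t → 0 ≤ m t := by
    intro t ht
    apply hmstep ⌈t / τ⌉₊ t (by linarith)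
    have h1 : t / τ ≤ (⌈t / τ⌉₊ : ℝ) := Nat.le_ceil _
    calc t = (t / τ) * τ := by field_simp
    _ ≤ (⌈t / τ⌉₊ : ℝ) * τ := by nlinarith
  -- Antitone u
  have hanti : AntitoneOn u (Set.Ici (0:ℝ)) := by
    apply antitoneOn_of_deriv_nonpos (convex_Ici 0) huc.continuousOn
    · intro x hx
      rw [interior_Ici] at hx
      exact ((hdu x hx.le).differentiableAt).differentiableWithinAt
    · intro x hx
      rw [interior_Ici] at hx
      rw [(hdu x hx.le).deriv]
      have h1 := hmnneg x hx.le
      have h2 := hunneg x hx.le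
      nlinarith [mul_nonneg (mul_nonneg hc.le h1) h2]
  -- Monotone m + p + q
  have hsd : ∀ t : ℝ, 0 ≤ t →
      HasDerivAt (fun x => m x + p x + q x) ((r / K) * m t * u t) t := by
    intro t ht
    have h := ((hdm t ht).add (hdp t ht)).add (hdq t ht)
    exact h.congr_deriv (by ring)
  have hmono : MonotoneOn (fun t => m t + p t + q t) (Set.Ici (0:ℝ)) := by
    apply monotoneOn_of_deriv_nonneg (convex_Ici 0)
      ((hmc.add hpc).add hqc).continuousOn
    · intro x hx
      rw [interior_Ici] at hx
      exact ((hsd x hx.le).differentiableAt).differentiableWithinAt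
    · intro x hx
      rw [interior_Ici] at hx
      rw [show (m + p + q) = (fun x => m x + p x + q x) from rfl, (hsd x hx.le).deriv]
      have h1 := hmnneg x hx.le
      have h2 := hunneg x hx.le
      positivity
  refine ⟨hanti, hmono, fun t ht => ?_⟩
  have h := hmono (Set.self_mem_Ici) (Set.mem_Ici.mpr ht) ht
  simp only at h
  linarith
end

section
/- Under the feasibility conditions, if m(t) → 0 as t → ∞, then p(t) → 0 and q(t) → 0 as t → ∞. -/
open MeasureTheory intervalIntegral Set Filter

lemma ftc_cont {f : ℝ → ℝ} (hf : Continuous f) (t : ℝ) :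
    HasDerivAt (fun x => ∫ s in (0:ℝ)..x, f s) (f t) t :=
  integral_hasDerivAt_right (hf.intervalIntegrable _ _)
    (hf.stronglyMeasurableAtFilter _ _) hf.continuousAt

lemma const_of {f : ℝ → ℝ} (hc : Continuous f)
    (hd : ∀ t : ℝ, 0 ≤ t → HasDerivAt f 0 t) : ∀ t, 0 ≤ t → f t = f 0 := by
  intro t ht
  exact constant_of_has_deriv_right_zero hc.continuousOn
    (fun x hx => (hd x hx.1).hasDerivWithinAt) t ⟨ht, le_rfl⟩

theorem stmt_10
    (K r τ : ℝ) (hK : 0 < K) (hr : 0 < r) (hτ : 0 < τ)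
    (m p q u : ℝ → ℝ)
    (hmc : Continuous m) (hpc : Continuous p) (hqc : Continuous q) (huc : Continuous u)
    (hdm : ∀ t : ℝ, 0 ≤ t →
      HasDerivAt m (-(r / K) * m t * u t + 2 * (r / K) * m (t - τ) * u (t - τ)) t)
    (hdp : ∀ t : ℝ, 0 ≤ t →
      HasDerivAt p ((r / K) * m t * u t - (r / K) * m (t - τ) * u (t - τ)) t)
    (hdq : ∀ t : ℝ, 0 ≤ t →
      HasDerivAt q ((r / K) * m t * u t - (r / K) * m (t - τ) * u (t - τ)) t)
    (hdu : ∀ t : ℝ, 0 ≤ t → HasDerivAt u (-(r / K) * m t * u t) t)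
    (hmnn : ∀ θ ∈ Set.Icc (-τ) (0 : ℝ), 0 ≤ m θ)
    (hpnn : ∀ θ ∈ Set.Icc (-τ) (0 : ℝ), 0 ≤ p θ)
    (hqnn : ∀ θ ∈ Set.Icc (-τ) (0 : ℝ), 0 ≤ q θ)
    (hunn : ∀ θ ∈ Set.Icc (-τ) (0 : ℝ), 0 ≤ u θ)
    (hsum : m 0 + p 0 + q 0 + u 0 = K)
    (hpin : p 0 = (r / K) * ∫ s in (-τ)..(0 : ℝ), m s * u s)
    (hqin : q 0 = (r / K) * ∫ s in (-τ)..(0 : ℝ), m s * u s)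
    (hmlim : Filter.Tendsto m Filter.atTop (nhds 0))
:
    Filter.Tendsto p Filter.atTop (nhds 0) ∧ Filter.Tendsto q Filter.atTop (nhds 0) := by
  have hcpos : 0 < r / K := div_pos hr hK
  set c : ℝ := r / K with hc
  -- primitive of m and exponential weight E
  set M : ℝ → ℝ := fun t => ∫ s in (0:ℝ)..t, m s with hMdef
  have hMd : ∀ t : ℝ, HasDerivAt M (m t) t := ftc_cont hmc
  have hMc : Continuous M :=
    (Differentiable.continuous fun t => (hMd t).differentiableAt)
  set E : ℝ → ℝ := fun t => Real.exp (c * M t) with hEdef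
  have hEd : ∀ t : ℝ, HasDerivAt E (c * m t * E t) t := by
    intro t
    have := (((hMd t).const_mul c).exp)
    convert this using 1
    ring
  have hEc : Continuous E := Real.continuous_exp.comp (continuous_const.mul hMc)
  have hEpos : ∀ t, 0 < E t := fun t => Real.exp_pos _
  -- u t * E t is constant for t ≥ 0
  have hvconst : ∀ t, 0 ≤ t → u t * E t = u 0 := by
    have h0 : u 0 * E 0 = u 0 := by
      simp [hEdef, hMdef]
    intro t ht
    rw [← h0]
    refine const_of (huc.mul hEc) ?_ t ht
    intro s hs
    have := ((hdu s hs).mul (hEd s))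
    refine this.congr_deriv ?_
    ring
  have hu0 : 0 ≤ u 0 := hunn 0 ⟨by linarith, le_rfl⟩
  have hunn' : ∀ t : ℝ, -τ ≤ t → 0 ≤ u t := by
    intro t ht
    rcases le_or_gt t 0 with h | h
    · exact hunn t ⟨ht, h⟩
    · have := hvconst t h.le
      nlinarith [hEpos t]
  -- primitive of u and exponential weight F
  set U : ℝ → ℝ := fun t => ∫ s in (0:ℝ)..t, u s with hUdef
  have hUd : ∀ t : ℝ, HasDerivAt U (u t) t := ftc_cont huc
  have hUc : Continuous U :=
    (Differentiable.continuous fun t => (hUd t).differentiableAt)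
  set F : ℝ → ℝ := fun t => Real.exp (c * U t) with hFdef
  have hFd : ∀ t : ℝ, HasDerivAt F (c * u t * F t) t := by
    intro t
    have := (((hUd t).const_mul c).exp)
    convert this using 1
    ring
  have hFc : Continuous F := Real.continuous_exp.comp (continuous_const.mul hUc)
  have hFpos : ∀ t, 0 < F t := fun t => Real.exp_pos _
  set g : ℝ → ℝ := fun t => m t * F t with hgdef
  have hgd : ∀ t : ℝ, 0 ≤ t →
      HasDerivAt g (2 * c * m (t - τ) * u (t - τ) * F t) t := by
    intro t ht
    have := ((hdm t ht).mul (hFd t))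
    refine this.congr_deriv ?_
    ring
  have hm0 : 0 ≤ m 0 := hmnn 0 ⟨by linarith, le_rfl⟩
  -- m is nonnegative on [0, n τ] by induction on n
  have key : ∀ n : ℕ, ∀ t : ℝ, 0 ≤ t → t ≤ n * τ → 0 ≤ m t := by
    intro n
    induction n with
    | zero =>
      intro t ht ht'
      simp only [Nat.cast_zero, zero_mul] at ht'
      have : t = 0 := le_antisymm ht' ht
      rw [this]; exact hm0
    | succ n ih =>
      intro t ht ht'
      have hb : (0:ℝ) ≤ (n+1) * τ := by positivity
      have hmono : MonotoneOn g (Icc 0 ((n+1) * τ)) := by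
        refine monotoneOn_of_deriv_nonneg (convex_Icc _ _) (hmc.mul hFc).continuousOn
          ?_ ?_
        · intro x hx
          rw [interior_Icc] at hx
          exact ((hgd x hx.1.le).differentiableAt).differentiableWithinAt
        · intro x hx
          rw [interior_Icc] at hx
          rw [(hgd x hx.1.le).deriv]
          have hmτ : 0 ≤ m (x - τ) := by
            rcases le_or_gt (x - τ) 0 with h | h
            · exact hmnn _ ⟨by linarith [hx.1], h⟩
            · exact ih _ h.le (by push_cast; linarith [hx.2])
          have huτ : 0 ≤ u (x - τ) := hunn' _ (by linarith [hx.1])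
          have := (hFpos x).le
          positivity
      have hg0 : 0 ≤ g 0 := by
        have : g 0 = m 0 * F 0 := rfl
        rw [this]
        exact mul_nonneg hm0 (hFpos 0).le
      have : g 0 ≤ g t := by
        refine hmono ⟨le_rfl, hb⟩ ⟨ht, by push_cast at ht' ⊢; linarith⟩ ht
      have hgt : 0 ≤ m t * F t := le_trans hg0 this
      have := hFpos t
      nlinarith
  have hmnn' : ∀ t : ℝ, -τ ≤ t → 0 ≤ m t := by
    intro t ht
    rcases le_or_gt t 0 with h | h
    · exact hmnn t ⟨ht, h⟩
    · obtain ⟨n, hn⟩ := exists_nat_ge (t / τ)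
      exact key n t h.le (by rw [← div_le_iff₀ hτ] at *; exact hn)
  -- u is bounded by u 0 on [0, ∞)
  have hub : ∀ t : ℝ, 0 ≤ t → u t ≤ u 0 := by
    intro t ht
    have hMnn : 0 ≤ M t := by
      apply intervalIntegral.integral_nonneg ht
      intro s hs
      exact hmnn' s (by linarith [hs.1])
    have hE1 : 1 ≤ E t := by
      simp only [hEdef]
      rw [Real.one_le_exp_iff]
      positivity
    have hv := hvconst t ht
    have hut : 0 ≤ u t := hunn' t (by linarith)
    nlinarith
  -- p equals the moving integral
  set f : ℝ → ℝ := fun t => m t * u t with hfdef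
  have hfc : Continuous f := hmc.mul huc
  set G : ℝ → ℝ := fun t => ∫ s in (0:ℝ)..t, f s with hGdef
  have hGd : ∀ t : ℝ, HasDerivAt G (f t) t := ftc_cont hfc
  have hGc : Continuous G :=
    (Differentiable.continuous fun t => (hGd t).differentiableAt)
  have hGshift : ∀ t : ℝ, HasDerivAt (fun x => G (x - τ)) (f (t - τ)) t := by
    intro t
    have h1 : HasDerivAt (fun x : ℝ => x - τ) 1 t := (hasDerivAt_id t).sub_const τ
    have := (hGd (t - τ)).comp t h1
    simpa [Function.comp_def] using this
  have hPconst : ∀ t, 0 ≤ t → p t - c * (G t - G (t - τ)) = p 0 - c * (G 0 - G (0 - τ)) := by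
    refine const_of (hpc.sub (continuous_const.mul (hGc.sub (hGc.comp (continuous_id.sub continuous_const))))) ?_
    intro t ht
    have := (hdp t ht).sub (((hGd t).sub (hGshift t)).const_mul c)
    refine this.congr_deriv ?_
    simp only [hfdef]
    ring
  have hP0 : p 0 - c * (G 0 - G (0 - τ)) = 0 := by
    have hG0 : G 0 = 0 := by simp [hGdef]
    have hGτ : G (0 - τ) = - ∫ s in (-τ)..(0:ℝ), f s := by
      simp only [hGdef, zero_sub]
      rw [← intervalIntegral.integral_symm]
    rw [hG0, hGτ, hpin]
    simp [hfdef]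
  have hpeq : ∀ t : ℝ, 0 ≤ t → p t = c * ∫ s in (t - τ)..t, f s := by
    intro t ht
    have h1 := hPconst t ht
    rw [hP0] at h1
    have h2 : G t - G (t - τ) = ∫ s in (t - τ)..t, f s := by
      simp only [hGdef]
      rw [← intervalIntegral.integral_add_adjacent_intervals
        (hfc.intervalIntegrable 0 (t - τ)) (hfc.intervalIntegrable (t - τ) t)]
      ring
    rw [← h2]
    linarith
  -- p and q agree on [0, ∞)
  have hpq : ∀ t : ℝ, 0 ≤ t → p t = q t := by
    intro t ht
    have := const_of (hpc.sub hqc) (fun s hs => by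
      have := (hdp s hs).sub (hdq s hs)
      simpa using this) t ht
    have h0 : p 0 - q 0 = 0 := by rw [hpin, hqin]; ring
    simp only [Pi.sub_apply] at this
    linarith [this]
  -- Tendsto p
  have hptend : Tendsto p atTop (nhds 0) := by
    rw [Metric.tendsto_atTop] at hmlim ⊢
    intro ε hε
    have hu1 : (0:ℝ) < u 0 + 1 := by linarith
    set δ : ℝ := ε / (c * τ * (u 0 + 1)) with hδdef
    have hδpos : 0 < δ := by positivity
    obtain ⟨N, hN⟩ := hmlim δ hδpos
    refine ⟨max N 0 + τ, fun t ht => ?_⟩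
    have htτ : max N 0 ≤ t - τ := by linarith
    have ht0 : (0:ℝ) ≤ t := by
      have := le_max_right N 0
      linarith
    -- pointwise bound on [t-τ, t]
    have hbound : ∀ s ∈ Icc (t - τ) t, f s ≤ δ * u 0 := by
      intro s hs
      have hsN : N ≤ s := le_trans (le_trans (le_max_left N 0) htτ) hs.1
      have hs0 : (0:ℝ) ≤ s := le_trans (le_trans (le_max_right N 0) htτ) hs.1
      have hm' := hN s hsN
      rw [Real.dist_eq, sub_zero] at hm'
      have hms : 0 ≤ m s := hmnn' s (by linarith)
      have hmd : m s ≤ δ := by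
        rw [abs_of_nonneg hms] at hm'
        exact hm'.le
      have hus : 0 ≤ u s := hunn' s (by linarith)
      have hus' : u s ≤ u 0 := hub s hs0
      exact mul_le_mul hmd hus' hus hδpos.le
    have hfnn : ∀ s ∈ Icc (t - τ) t, 0 ≤ f s := by
      intro s hs
      have hs0 : (0:ℝ) ≤ s := le_trans (le_trans (le_max_right N 0) htτ) hs.1
      exact mul_nonneg (hmnn' s (by linarith)) (hunn' s (by linarith))
    have hle : t - τ ≤ t := by linarith
    have hint1 : (∫ s in (t - τ)..t, f s) ≤ ∫ s in (t - τ)..t, δ * u 0 := by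
      apply intervalIntegral.integral_mono_on hle (hfc.intervalIntegrable _ _)
        (intervalIntegrable_const)
      exact hbound
    have hint2 : (∫ s in (t - τ)..t, (δ * u 0 : ℝ)) = τ * (δ * u 0) := by
      rw [intervalIntegral.integral_const]
      simp
    have hintnn : 0 ≤ ∫ s in (t - τ)..t, f s := by
      apply intervalIntegral.integral_nonneg hle
      exact hfnn
    have hpt := hpeq t ht0
    rw [Real.dist_eq, sub_zero]
    have hpnn : 0 ≤ p t := by
      rw [hpt]; positivity
    rw [abs_of_nonneg hpnn, hpt]
    have hfin : c * (τ * (δ * u 0)) < ε := by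
      have : c * τ * (u 0 + 1) * δ = ε := by
        rw [hδdef]
        field_simp
      nlinarith
    have hstep : c * ∫ s in (t - τ)..t, f s ≤ c * (τ * (δ * u 0)) := by
      rw [← hint2]
      exact mul_le_mul_of_nonneg_left hint1 hcpos.le
    linarith
  refine ⟨hptend, Filter.Tendsto.congr' ?_ hptend⟩
  filter_upwards [eventually_ge_atTop (0:ℝ)] with t ht
  exact hpq t ht
end

section
/- Under the feasibility conditions, if m(0) > 0, then the solution does not converge to the empty state: it is not the case that m(t) → 0, p(t) → 0, q(t) → 0 and u(t) → K as t → ∞. -/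
theorem stmt_11
    (K r τ : ℝ) (hK : 0 < K) (hr : 0 < r) (hτ : 0 < τ)
    (m p q u : ℝ → ℝ)
    (hmc : Continuous m) (hpc : Continuous p) (hqc : Continuous q) (huc : Continuous u)
    (hdm : ∀ t : ℝ, 0 ≤ t →
      HasDerivAt m (-(r / K) * m t * u t + 2 * (r / K) * m (t - τ) * u (t - τ)) t)
    (hdp : ∀ t : ℝ, 0 ≤ t →
      HasDerivAt p ((r / K) * m t * u t - (r / K) * m (t - τ) * u (t - τ)) t)
    (hdq : ∀ t : ℝ, 0 ≤ t →
      HasDerivAt q ((r / K) * m t * u t - (r / K) * m (t - τ) * u (t - τ)) t)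
    (hdu : ∀ t : ℝ, 0 ≤ t → HasDerivAt u (-(r / K) * m t * u t) t)
    (hmnn : ∀ θ ∈ Set.Icc (-τ) (0 : ℝ), 0 ≤ m θ)
    (hpnn : ∀ θ ∈ Set.Icc (-τ) (0 : ℝ), 0 ≤ p θ)
    (hqnn : ∀ θ ∈ Set.Icc (-τ) (0 : ℝ), 0 ≤ q θ)
    (hunn : ∀ θ ∈ Set.Icc (-τ) (0 : ℝ), 0 ≤ u θ)
    (hsum : m 0 + p 0 + q 0 + u 0 = K)
    (hpin : p 0 = (r / K) * ∫ s in (-τ)..(0 : ℝ), m s * u s)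
    (hqin : q 0 = (r / K) * ∫ s in (-τ)..(0 : ℝ), m s * u s)
    (hmpos : 0 < m 0)
:
    ¬ (Filter.Tendsto m Filter.atTop (nhds 0) ∧ Filter.Tendsto p Filter.atTop (nhds 0) ∧
       Filter.Tendsto q Filter.atTop (nhds 0) ∧ Filter.Tendsto u Filter.atTop (nhds K)) := by
  have hcpos : 0 < r / K := div_pos hr hK
  set c := r / K with hc
  -- primitive of a continuous function
  have prim : ∀ (f : ℝ → ℝ), Continuous f → ∀ t : ℝ,
      HasDerivAt (fun x => ∫ s in (0:ℝ)..x, f s) (f t) t := by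
    intro f hf t
    exact intervalIntegral.integral_hasDerivAt_right (hf.intervalIntegrable 0 t)
      (hf.stronglyMeasurable.stronglyMeasurableAtFilter) hf.continuousAt
  have hu0nn : 0 ≤ u 0 := hunn 0 ⟨by linarith, le_refl 0⟩
  -- Step A : u ≥ 0 on [0,∞)
  set J : ℝ → ℝ := fun t => c * ∫ s in (0:ℝ)..t, m s with hJdef
  have hJd : ∀ t : ℝ, HasDerivAt J (c * m t) t := fun t => (prim m hmc t).const_mul c
  have hJc : Continuous J := by
    refine continuous_iff_continuousAt.2 fun t => (hJd t).continuousAt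
  have hgconst : ∀ t : ℝ, 0 ≤ t → u t * Real.exp (J t) = u 0 * Real.exp (J 0) := by
    intro t ht
    have key := constant_of_has_deriv_right_zero (f := fun x => u x * Real.exp (J x))
      (a := 0) (b := t)
      ((huc.mul (Real.continuous_exp.comp hJc)).continuousOn)
      (by
        intro x hx
        have hd : HasDerivAt (fun x => u x * Real.exp (J x))
            ((-c * m x * u x) * Real.exp (J x) + u x * (Real.exp (J x) * (c * m x))) x :=
          (hdu x hx.1).mul ((hJd x).exp)
        have hz : (-c * m x * u x) * Real.exp (J x) + u x * (Real.exp (J x) * (c * m x)) = 0 := by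
          ring
        rw [hz] at hd
        exact hd.hasDerivWithinAt)
    exact key t ⟨ht, le_refl t⟩
  have hun : ∀ t : ℝ, 0 ≤ t → 0 ≤ u t := by
    intro t ht
    have h := hgconst t ht
    have h1 : 0 < Real.exp (J t) := Real.exp_pos _
    have h2 : 0 ≤ u 0 * Real.exp (J 0) := mul_nonneg hu0nn (Real.exp_pos _).le
    nlinarith
  -- Step B : m > 0 on [0,∞)
  set I : ℝ → ℝ := fun t => c * ∫ s in (0:ℝ)..t, u s with hIdef
  have hId : ∀ t : ℝ, HasDerivAt I (c * u t) t := fun t => (prim u huc t).const_mul c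
  have hIc : Continuous I := continuous_iff_continuousAt.2 fun t => (hId t).continuousAt
  set V : ℝ → ℝ := fun t => m t * Real.exp (I t) with hVdef
  have hVc : Continuous V := hmc.mul (Real.continuous_exp.comp hIc)
  have hVd : ∀ t : ℝ, 0 ≤ t →
      HasDerivAt V (Real.exp (I t) * (2 * c * m (t - τ) * u (t - τ))) t := by
    intro t ht
    have hd : HasDerivAt V
        ((-c * m t * u t + 2 * c * m (t - τ) * u (t - τ)) * Real.exp (I t)
          + m t * (Real.exp (I t) * (c * u t))) t := (hdm t ht).mul ((hId t).exp)
    have hz : (-c * m t * u t + 2 * c * m (t - τ) * u (t - τ)) * Real.exp (I t)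
          + m t * (Real.exp (I t) * (c * u t))
        = Real.exp (I t) * (2 * c * m (t - τ) * u (t - τ)) := by ring
    rwa [hz] at hd
  have hV0 : V 0 = m 0 := by
    simp [hVdef, hIdef, intervalIntegral.integral_same]
  have hVge : ∀ n : ℕ, ∀ t : ℝ, 0 ≤ t → t ≤ (n : ℝ) * τ → m 0 ≤ V t := by
    intro n
    induction n with
    | zero =>
      intro t ht htn
      have : t = 0 := le_antisymm (by simpa using htn) ht
      rw [this, hV0]
    | succ n ih =>
      intro t ht htn
      rcases le_or_gt t ((n : ℝ) * τ) with h | h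
      · exact ih t ht h
      · have hnτ : (0:ℝ) ≤ (n : ℝ) * τ := mul_nonneg (Nat.cast_nonneg n) hτ.le
        have hmono : MonotoneOn V (Set.Icc ((n : ℝ) * τ) (((n : ℝ) + 1) * τ)) := by
          apply monotoneOn_of_deriv_nonneg (convex_Icc _ _) hVc.continuousOn
          · intro x hx
            rw [interior_Icc] at hx
            have hx0 : (0:ℝ) ≤ x := le_trans hnτ hx.1.le
            exact ((hVd x hx0).differentiableAt).differentiableWithinAt
          · intro x hx
            rw [interior_Icc] at hx
            have hx0 : (0:ℝ) ≤ x := le_trans hnτ hx.1.le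
            rw [(hVd x hx0).deriv]
            have hmu : 0 ≤ m (x - τ) * u (x - τ) := by
              rcases lt_or_ge (x - τ) 0 with hs | hs
              · have hsm : x - τ ∈ Set.Icc (-τ) (0:ℝ) := ⟨by linarith, hs.le⟩
                exact mul_nonneg (hmnn _ hsm) (hunn _ hsm)
              · have hsle : x - τ ≤ (n : ℝ) * τ := by
                  have := hx.2
                  linarith
                have hVs := ih (x - τ) hs hsle
                have hexp : 0 < Real.exp (I (x - τ)) := Real.exp_pos _
                have hms : 0 < m (x - τ) := by
                  by_contra hcon
                  push_neg at hcon
                  have : V (x - τ) ≤ 0 := mul_nonpos_of_nonpos_of_nonneg hcon hexp.le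
                  linarith
                exact mul_nonneg hms.le (hun _ hs)
            have hexp : (0:ℝ) ≤ Real.exp (I x) := (Real.exp_pos _).le
            have h2c : (0:ℝ) ≤ 2 * c := by linarith
            calc (0:ℝ) = Real.exp (I x) * (2 * c * 0) := by ring
              _ ≤ Real.exp (I x) * (2 * c * (m (x - τ) * u (x - τ))) := by
                  apply mul_le_mul_of_nonneg_left _ hexp
                  exact mul_le_mul_of_nonneg_left hmu h2c
              _ = Real.exp (I x) * (2 * c * m (x - τ) * u (x - τ)) := by ring
        have hmem1 : ((n : ℝ) * τ) ∈ Set.Icc ((n : ℝ) * τ) (((n : ℝ) + 1) * τ) :=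
          ⟨le_refl _, by nlinarith⟩
        have htn' : t ≤ ((n : ℝ) + 1) * τ := by push_cast at htn; linarith
        have hmem2 : t ∈ Set.Icc ((n : ℝ) * τ) (((n : ℝ) + 1) * τ) := ⟨h.le, htn'⟩
        calc m 0 ≤ V ((n : ℝ) * τ) := ih _ hnτ (le_refl _)
          _ ≤ V t := hmono hmem1 hmem2 h.le
  -- consequences: m > 0 hence m*u ≥ 0 on [-τ, ∞)
  have hmn : ∀ t : ℝ, 0 ≤ t → 0 < m t := by
    intro t ht
    obtain ⟨n, hn⟩ := exists_nat_ge (t / τ)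
    have htn : t ≤ (n : ℝ) * τ := by
      rw [div_le_iff₀ hτ] at hn; linarith
    have hV := hVge n t ht htn
    have hexp : 0 < Real.exp (I t) := Real.exp_pos _
    by_contra hcon
    push_neg at hcon
    have : V t ≤ 0 := mul_nonpos_of_nonpos_of_nonneg hcon hexp.le
    linarith
  have hmu : ∀ s : ℝ, -τ ≤ s → 0 ≤ m s * u s := by
    intro s hs
    rcases lt_or_ge s 0 with h | h
    · exact mul_nonneg (hmnn s ⟨hs, h.le⟩) (hunn s ⟨hs, h.le⟩)
    · exact mul_nonneg (hmn s h).le (hun s h)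
  -- W = m + p is nondecreasing on [0,∞)
  set W : ℝ → ℝ := fun t => m t + p t with hWdef
  have hWd : ∀ t : ℝ, 0 ≤ t → HasDerivAt W (c * (m (t - τ) * u (t - τ))) t := by
    intro t ht
    have hd := (hdm t ht).add (hdp t ht)
    have hz : -c * m t * u t + 2 * c * m (t - τ) * u (t - τ)
        + (c * m t * u t - c * m (t - τ) * u (t - τ)) = c * (m (t - τ) * u (t - τ)) := by ring
    rwa [hz] at hd
  have hWmono : ∀ t : ℝ, 0 ≤ t → W 0 ≤ W t := by
    intro t ht
    have hmono : MonotoneOn W (Set.Icc (0:ℝ) t) := by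
      apply monotoneOn_of_deriv_nonneg (convex_Icc _ _) (hmc.add hpc).continuousOn
      · intro x hx
        rw [interior_Icc] at hx
        exact ((hWd x hx.1.le).differentiableAt).differentiableWithinAt
      · intro x hx
        rw [interior_Icc] at hx
        change 0 ≤ deriv W x
        rw [(hWd x hx.1.le).deriv]
        exact mul_nonneg hcpos.le (hmu _ (by linarith [hx.1]))
    exact hmono ⟨le_refl _, ht⟩ ⟨ht, le_refl _⟩ ht
  have hp0 : 0 ≤ p 0 := by
    rw [hpin]
    exact mul_nonneg hcpos.le (intervalIntegral.integral_nonneg (by linarith)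
      (fun s hs => mul_nonneg (hmnn s hs) (hunn s hs)))
  -- conclude
  rintro ⟨hm, hp, _, _⟩
  have hW : Filter.Tendsto W Filter.atTop (nhds 0) := by
    have := hm.add hp
    simpa using this
  have hev : ∀ᶠ t in Filter.atTop, W 0 ≤ W t :=
    Filter.eventually_atTop.2 ⟨0, fun t ht => hWmono t ht⟩
  have : (0:ℝ) ≥ W 0 := ge_of_tendsto hW hev
  have : W 0 = m 0 + p 0 := rfl
  linarith [this ▸ ‹(0:ℝ) ≥ W 0›]
end

section
/- (Theorem 1) Under the feasibility conditions, if m(0) > 0, then as t → ∞ one has m(t) → K, p(t) → 0, q(t) → 0 and u(t) → 0. -/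
open Set Filter intervalIntegral

lemma myEqOn_Ici {f g d : ℝ → ℝ} {a : ℝ}
    (hf : ∀ t, a ≤ t → HasDerivAt f (d t) t) (hg : ∀ t, a ≤ t → HasDerivAt g (d t) t)
    (h0 : f a = g a) : ∀ t, a ≤ t → f t = g t := by
  intro t ht
  have key := constant_of_has_deriv_right_zero (f := fun s => f s - g s) (a := a) (b := t)
    (fun x hx => (((hf x hx.1).sub (hg x hx.1)).continuousAt).continuousWithinAt)
    (fun x hx => by
      exact (((hf x hx.1).sub (hg x hx.1)).hasDerivWithinAt (s := Ici x)).congr_deriv (sub_self _))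
  have h2 := key t ⟨ht, le_rfl⟩
  linarith [h2, h0]

lemma myMonoOn_Ici {f d : ℝ → ℝ} {a : ℝ}
    (hf : ∀ t, a ≤ t → HasDerivAt f (d t) t) (hd : ∀ t, a ≤ t → 0 ≤ d t) :
    MonotoneOn f (Ici a) := by
  apply monotoneOn_of_hasDerivWithinAt_nonneg (f' := d) (convex_Ici a)
  · exact fun x hx => ((hf x hx).continuousAt).continuousWithinAt
  · intro x hx
    rw [interior_Ici] at hx
    exact (hf x (le_of_lt hx)).hasDerivWithinAt
  · intro x hx
    rw [interior_Ici] at hx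
    exact hd x (le_of_lt hx)

lemma myAntiOn_Ici {f d : ℝ → ℝ} {a : ℝ}
    (hf : ∀ t, a ≤ t → HasDerivAt f (d t) t) (hd : ∀ t, a ≤ t → d t ≤ 0) :
    AntitoneOn f (Ici a) := by
  apply antitoneOn_of_hasDerivWithinAt_nonpos (f' := d) (convex_Ici a)
  · exact fun x hx => ((hf x hx).continuousAt).continuousWithinAt
  · intro x hx
    rw [interior_Ici] at hx
    exact (hf x (le_of_lt hx)).hasDerivWithinAt
  · intro x hx
    rw [interior_Ici] at hx
    exact hd x (le_of_lt hx)

theorem stmt_12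
    (K r τ : ℝ) (hK : 0 < K) (hr : 0 < r) (hτ : 0 < τ)
    (m p q u : ℝ → ℝ)
    (hmc : Continuous m) (hpc : Continuous p) (hqc : Continuous q) (huc : Continuous u)
    (hdm : ∀ t : ℝ, 0 ≤ t →
      HasDerivAt m (-(r / K) * m t * u t + 2 * (r / K) * m (t - τ) * u (t - τ)) t)
    (hdp : ∀ t : ℝ, 0 ≤ t →
      HasDerivAt p ((r / K) * m t * u t - (r / K) * m (t - τ) * u (t - τ)) t)
    (hdq : ∀ t : ℝ, 0 ≤ t →
      HasDerivAt q ((r / K) * m t * u t - (r / K) * m (t - τ) * u (t - τ)) t)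
    (hdu : ∀ t : ℝ, 0 ≤ t → HasDerivAt u (-(r / K) * m t * u t) t)
    (hmnn : ∀ θ ∈ Set.Icc (-τ) (0 : ℝ), 0 ≤ m θ)
    (hpnn : ∀ θ ∈ Set.Icc (-τ) (0 : ℝ), 0 ≤ p θ)
    (hqnn : ∀ θ ∈ Set.Icc (-τ) (0 : ℝ), 0 ≤ q θ)
    (hunn : ∀ θ ∈ Set.Icc (-τ) (0 : ℝ), 0 ≤ u θ)
    (hsum : m 0 + p 0 + q 0 + u 0 = K)
    (hpin : p 0 = (r / K) * ∫ s in (-τ)..(0 : ℝ), m s * u s)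
    (hqin : q 0 = (r / K) * ∫ s in (-τ)..(0 : ℝ), m s * u s)
    (hmpos : 0 < m 0)
:
    Filter.Tendsto m Filter.atTop (nhds K) ∧ Filter.Tendsto p Filter.atTop (nhds 0) ∧
    Filter.Tendsto q Filter.atTop (nhds 0) ∧ Filter.Tendsto u Filter.atTop (nhds 0) := by
  have hc : (0:ℝ) < r / K := div_pos hr hK
  set a : ℝ → ℝ := fun t => r / K * m t * u t with ha_def
  have hac : Continuous a := (continuous_const.mul hmc).mul huc
  -- Step 1: u nonneg on [0, ∞), hence on [-τ, ∞)
  have hu0 : ∀ t : ℝ, 0 ≤ t → 0 ≤ u t := by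
    set I : ℝ → ℝ := fun t => ∫ s in (0:ℝ)..t, r / K * m s with hI_def
    have hI : ∀ t : ℝ, HasDerivAt I (r / K * m t) t := fun t =>
      ((continuous_const.mul hmc).integral_hasStrictDerivAt 0 t).hasDerivAt
    have hg : ∀ t : ℝ, 0 ≤ t →
        HasDerivAt (fun s => u s * Real.exp (I s)) 0 t := by
      intro t ht
      have := (hdu t ht).mul ((hI t).exp)
      exact this.congr_deriv (by ring)
    have hconst := myEqOn_Ici (g := fun _ => u 0 * Real.exp (I 0)) (d := fun _ => (0:ℝ))
      hg (fun t _ => hasDerivAt_const t _) rfl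
    intro t ht
    have h2 := hconst t ht
    have hI0 : I 0 = 0 := intervalIntegral.integral_same
    rw [hI0, Real.exp_zero, mul_one] at h2
    have hu00 : 0 ≤ u 0 := hunn 0 ⟨by linarith, le_rfl⟩
    nlinarith [Real.exp_pos (I t), h2, mul_nonneg hu00 (Real.exp_pos (I t)).le]
  have hu_nn : ∀ t : ℝ, -τ ≤ t → 0 ≤ u t := by
    intro t ht
    rcases le_or_gt 0 t with h | h
    · exact hu0 t h
    · exact hunn t ⟨ht, h.le⟩
  -- Step 2: m nonneg on [-τ, ∞), positive on [0, ∞)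
  set J : ℝ → ℝ := fun t => ∫ s in (0:ℝ)..t, r / K * u s with hJ_def
  have hJ : ∀ t : ℝ, HasDerivAt J (r / K * u t) t := fun t =>
    ((continuous_const.mul huc).integral_hasStrictDerivAt 0 t).hasDerivAt
  have hh : ∀ t : ℝ, 0 ≤ t →
      HasDerivAt (fun s => m s * Real.exp (J s))
        (2 * (r / K) * m (t - τ) * u (t - τ) * Real.exp (J t)) t := by
    intro t ht
    have := (hdm t ht).mul ((hJ t).exp)
    exact this.congr_deriv (by ring)
  have key2 : ∀ t : ℝ, 0 ≤ t → (∀ s : ℝ, -τ ≤ s → s ≤ t - τ → 0 ≤ m s) →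
      m 0 ≤ m t * Real.exp (J t) := by
    intro t ht hm_past
    have hmono : MonotoneOn (fun s => m s * Real.exp (J s)) (Icc 0 t) := by
      apply monotoneOn_of_hasDerivWithinAt_nonneg
        (f' := fun s => 2 * (r / K) * m (s - τ) * u (s - τ) * Real.exp (J s)) (convex_Icc 0 t)
      · exact (hmc.mul (Real.continuous_exp.comp
          (intervalIntegral.continuous_primitive
            ((continuous_const.mul huc).intervalIntegrable) 0))).continuousOn
      · intro x hx
        have hx' := interior_subset hx
        exact (hh x hx'.1).hasDerivWithinAt
      · intro x hx
        have hx' := interior_subset hx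
        have h1 : 0 ≤ m (x - τ) := hm_past (x - τ) (by linarith [hx'.1]) (by linarith [hx'.2])
        have h2 : 0 ≤ u (x - τ) := hu_nn (x - τ) (by linarith [hx'.1])
        positivity
      done
    have := hmono (left_mem_Icc.2 ht) (right_mem_Icc.2 ht) ht
    simp only [] at this
    have hJ0 : J 0 = 0 := intervalIntegral.integral_same
    rw [hJ0, Real.exp_zero, mul_one] at this
    exact this
  have hm_nn : ∀ t : ℝ, -τ ≤ t → 0 ≤ m t := by
    have hind : ∀ n : ℕ, ∀ t : ℝ, -τ ≤ t → t ≤ n * τ → 0 ≤ m t := by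
      intro n
      induction n with
      | zero => intro t ht ht'; exact hmnn t ⟨ht, by simpa using ht'⟩
      | succ k ih =>
        intro t ht ht'
        rcases le_or_gt t 0 with h | h
        · exact hmnn t ⟨ht, h⟩
        · have hk : ∀ s : ℝ, -τ ≤ s → s ≤ t - τ → 0 ≤ m s := by
            intro s hs hs'
            apply ih s hs
            have : (↑(k+1) : ℝ) * τ = k * τ + τ := by push_cast; ring
            rw [this] at ht'
            linarith
          have := key2 t h.le hk
          nlinarith [Real.exp_pos (J t), hmpos]
    intro t ht
    rcases le_or_gt t 0 with h | h
    · exact hmnn t ⟨ht, h⟩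
    · obtain ⟨n, hn⟩ := exists_nat_ge (t / τ)
      exact hind n t ht (by rw [div_le_iff₀ hτ] at hn; linarith)
  have hm_pos : ∀ t : ℝ, 0 ≤ t → 0 < m t := by
    intro t ht
    have := key2 t ht (fun s hs _ => hm_nn s hs)
    nlinarith [Real.exp_pos (J t), hmpos]
  -- Step 3: u antitone on [0, ∞)
  have hu_ant : AntitoneOn u (Ici 0) := by
    apply myAntiOn_Ici (d := fun t => -(r / K) * m t * u t) hdu
    intro t ht
    have := mul_nonneg (mul_nonneg hc.le (hm_pos t ht).le) (hu0 t ht)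
    nlinarith
  -- Step 4: limit L of u
  set v : ℝ → ℝ := fun t => u (max t 0) with hv_def
  have hv_ant : Antitone v := by
    intro s t hst
    exact hu_ant (le_max_right s 0) (le_max_right t 0) (max_le_max hst le_rfl)
  have hv_bdd : BddBelow (range v) := by
    refine ⟨0, ?_⟩
    rintro x ⟨t, rfl⟩
    exact hu0 _ (le_max_right t 0)
  set L : ℝ := ⨅ t, v t with hL_def
  have hvL : Tendsto v atTop (nhds L) := tendsto_atTop_ciInf hv_ant hv_bdd
  have huv : ∀ t : ℝ, 0 ≤ t → u t = v t := by
    intro t ht; simp [hv_def, max_eq_left ht]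
  have huL : Tendsto u atTop (nhds L) := by
    apply hvL.congr'
    filter_upwards [eventually_ge_atTop (0:ℝ)] with t ht
    exact (huv t ht).symm
  have hL_nn : 0 ≤ L := le_ciInf fun t => hu0 _ (le_max_right t 0)
  have hL_le : ∀ t : ℝ, 0 ≤ t → L ≤ u t := by
    intro t ht
    rw [huv t ht]
    exact ciInf_le hv_bdd t
  -- Step 5: q = p on [0, ∞)
  have hqp : ∀ t : ℝ, 0 ≤ t → q t = p t :=
    myEqOn_Ici hdq hdp (by rw [hpin, hqin])
  -- Step 6: m + p + q + u = K on [0, ∞)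
  have hsumK : ∀ t : ℝ, 0 ≤ t → m t + p t + q t + u t = K := by
    have := myEqOn_Ici (f := fun t => m t + p t + q t + u t) (g := fun _ => K)
      (d := fun _ => (0:ℝ))
      (fun t ht => by
        have := (((hdm t ht).add (hdp t ht)).add (hdq t ht)).add (hdu t ht)
        exact this.congr_deriv (by ring))
      (fun t _ => hasDerivAt_const t _) hsum
    intro t ht
    exact this t ht
  -- Step 7: p t = u (t - τ) - u t for t ≥ τ
  have hp_repr : ∀ t : ℝ, τ ≤ t → p t = u (t - τ) - u t := by
    have hpτ : p τ = u 0 - u τ := by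
      have hFTCp : ∫ s in (0:ℝ)..τ, ((r / K) * m s * u s - (r / K) * m (s - τ) * u (s - τ))
          = p τ - p 0 := by
        apply intervalIntegral.integral_eq_sub_of_hasDerivAt
        · intro x hx
          rw [uIcc_of_le hτ.le] at hx
          exact hdp x hx.1
        · exact Continuous.intervalIntegrable (((continuous_const.mul hmc).mul huc).sub
            ((continuous_const.mul (hmc.comp (continuous_id.sub continuous_const))).mul
              (huc.comp (continuous_id.sub continuous_const)))) _ _
      have hFTCu : ∫ s in (0:ℝ)..τ, -((r / K) * m s * u s) = u τ - u 0 := by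
        apply intervalIntegral.integral_eq_sub_of_hasDerivAt
        · intro x hx
          rw [uIcc_of_le hτ.le] at hx
          have := hdu x hx.1
          exact this.congr_deriv (by ring)
        · exact Continuous.intervalIntegrable ((continuous_const.mul hmc).mul huc).neg _ _
      have hsplit : ∫ s in (0:ℝ)..τ, ((r / K) * m s * u s - (r / K) * m (s - τ) * u (s - τ))
          = (∫ s in (0:ℝ)..τ, (r / K) * m s * u s)
            - ∫ s in (0:ℝ)..τ, (r / K) * m (s - τ) * u (s - τ) := by
        apply intervalIntegral.integral_sub
        · exact Continuous.intervalIntegrable ((continuous_const.mul hmc).mul huc) _ _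
        · exact Continuous.intervalIntegrable
            ((continuous_const.mul (hmc.comp (continuous_id.sub continuous_const))).mul
              (huc.comp (continuous_id.sub continuous_const))) _ _
      have hshift : (∫ s in (0:ℝ)..τ, (r / K) * m (s - τ) * u (s - τ))
          = ∫ s in (-τ)..(0:ℝ), (r / K) * m s * u s := by
        have := intervalIntegral.integral_comp_sub_right
          (a := (0:ℝ)) (b := τ) (f := fun s => (r / K) * m s * u s) τ
        simpa using this
      have hp0' : p 0 = ∫ s in (-τ)..(0:ℝ), (r / K) * m s * u s := by
        rw [hpin, ← intervalIntegral.integral_const_mul]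
        congr 1
        ext s
        ring
      have hneg : ∫ s in (0:ℝ)..τ, -((r / K) * m s * u s)
          = -∫ s in (0:ℝ)..τ, (r / K) * m s * u s := intervalIntegral.integral_neg
      rw [hneg] at hFTCu
      rw [hsplit, hshift, ← hp0'] at hFTCp
      linarith
    have := myEqOn_Ici (f := p) (g := fun t => u (t - τ) - u t)
      (d := fun t => (r / K) * m t * u t - (r / K) * m (t - τ) * u (t - τ))
      (a := τ)
      (fun t ht => hdp t (by linarith))
      (fun t ht => by
        have h1 : HasDerivAt (fun s => u (s - τ)) (-(r / K) * m (t - τ) * u (t - τ)) t := by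
          have := (hdu (t - τ) (by linarith)).comp t ((hasDerivAt_id t).sub_const τ)
          exact this.congr_deriv (by ring)
        have := h1.sub (hdu t (by linarith))
        exact this.congr_deriv (by ring))
      (by simpa using hpτ)
    intro t ht
    exact this t ht
  -- Step 8: p → 0
  have huLshift : Tendsto (fun t => u (t - τ)) atTop (nhds L) :=
    huL.comp (tendsto_atTop_add_const_right atTop (-τ) tendsto_id)
  have hpL : Tendsto p atTop (nhds 0) := by
    have : Tendsto (fun t => u (t - τ) - u t) atTop (nhds (L - L)) := huLshift.sub huL
    rw [sub_self] at this
    apply this.congr'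
    filter_upwards [eventually_ge_atTop τ] with t ht
    exact (hp_repr t ht).symm
  have hqL : Tendsto q atTop (nhds 0) := by
    apply hpL.congr'
    filter_upwards [eventually_ge_atTop (0:ℝ)] with t ht
    exact (hqp t ht).symm
  -- Step 9: m → K - L
  have hmL : Tendsto m atTop (nhds (K - L)) := by
    have h1 : Tendsto (fun t => K - p t - q t - u t) atTop (nhds (K - 0 - 0 - L)) :=
      ((tendsto_const_nhds.sub hpL).sub hqL).sub huL
    have h2 : Tendsto (fun t => K - p t - q t - u t) atTop (nhds (K - L)) := by
      convert h1 using 2; ring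
    apply h2.congr'
    filter_upwards [eventually_ge_atTop (0:ℝ)] with t ht
    have := hsumK t ht
    linarith
  -- Step 10: L = 0
  have hLK : L < K := by
    have h1 := hsumK τ hτ.le
    have h2 : 0 ≤ p τ := by
      have hττ : τ - τ = 0 := sub_self τ
      rw [hp_repr τ le_rfl, hττ]
      have := hu_ant (mem_Ici.mpr le_rfl : (0:ℝ) ∈ Ici (0:ℝ)) (mem_Ici.mpr hτ.le) hτ.le
      linarith
    have h3 : 0 ≤ q τ := by rw [hqp τ hτ.le]; exact h2
    have h4 := hm_pos τ hτ.le
    have h5 := hL_le τ hτ.le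
    linarith
  have hL0 : L = 0 := by
    by_contra hL
    have hLpos : 0 < L := lt_of_le_of_ne hL_nn (Ne.symm hL)
    set ε : ℝ := r / K * (K - L) * L with hε_def
    have hεpos : 0 < ε := by
      apply mul_pos (mul_pos hc _) hLpos
      linarith
    have haL : Tendsto a atTop (nhds ε) := by
      have h1 : Tendsto (fun t => r / K * m t) atTop (nhds (r / K * (K - L))) :=
        hmL.const_mul _
      exact h1.mul huL
    have hev : ∀ᶠ t in atTop, ε / 2 < a t := by
      have h2 : ε / 2 < ε := half_lt_self hεpos
      exact haL.eventually (eventually_gt_nhds h2)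
    obtain ⟨T, hT⟩ := (hev.and (eventually_ge_atTop (0:ℝ))).exists_forall_of_atTop
    -- φ t = u t + ε/2 * t is antitone on [T, ∞)
    have hφ : AntitoneOn (fun t => u t + ε / 2 * t) (Ici T) := by
      apply myAntiOn_Ici (d := fun t => -(r / K) * m t * u t + ε / 2)
      · intro t ht
        have hid : HasDerivAt (fun s : ℝ => ε / 2 * s) (ε / 2) t := by
          simpa using (hasDerivAt_id t).const_mul (ε / 2)
        exact (hdu t (le_trans (hT T le_rfl).2 ht)).add hid
      · intro t ht
        have := (hT t ht).1
        simp only [ha_def] at this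
        linarith
    set C : ℝ := u T + ε / 2 * T with hC_def
    set t0 : ℝ := max T (2 * (C + 1) / ε) with ht0_def
    have ht0T : T ≤ t0 := le_max_left _ _
    have h1 : u t0 + ε / 2 * t0 ≤ C := hφ (mem_Ici.mpr le_rfl) (mem_Ici.mpr ht0T) ht0T
    have h2 : 2 * (C + 1) / ε ≤ t0 := le_max_right _ _
    clear_value C t0
    have h3 : C + 1 ≤ ε / 2 * t0 := by
      rw [div_le_iff₀ hεpos] at h2
      calc C + 1 = 2 * (C + 1) / 2 := by ring
        _ ≤ t0 * ε / 2 := by linarith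
        _ = ε / 2 * t0 := by ring
    have h4 : 0 ≤ u t0 := hu0 t0 (le_trans (hT T le_rfl).2 ht0T)
    linarith
  refine ⟨?_, hpL, hqL, ?_⟩
  · rw [hL0, sub_zero] at hmL; exact hmL
  · rw [hL0] at huL; exact huL
end

section
/- Key step of Theorem 1: under the feasibility conditions, if m(0) > 0, then u(t) → 0 as t → ∞. -/
open Filter Set Topology

private lemma my_ftc {f : ℝ → ℝ} (hf : Continuous f) (b : ℝ) :
    HasDerivAt (fun t => ∫ s in (0:ℝ)..t, f s) (f b) b :=
  intervalIntegral.integral_hasDerivAt_right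
    (hf.intervalIntegrable _ _)
    (hf.stronglyMeasurableAtFilter _ _) hf.continuousAt

private lemma my_const {f : ℝ → ℝ} (hfc : Continuous f)
    (hf : ∀ t, 0 ≤ t → HasDerivAt f 0 t) : ∀ t, 0 ≤ t → f t = f 0 := by
  have hd : ∀ x ∈ interior (Set.Ici (0:ℝ)), HasDerivAt f 0 x := fun x hx =>
    hf x (le_of_lt (by simpa [interior_Ici] using hx))
  have h1 : MonotoneOn f (Set.Ici 0) :=
    monotoneOn_of_deriv_nonneg (convex_Ici 0) hfc.continuousOn
      (fun x hx => (hd x hx).differentiableAt.differentiableWithinAt)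
      (fun x hx => le_of_eq ((hd x hx).deriv).symm)
  have h2 : AntitoneOn f (Set.Ici 0) :=
    antitoneOn_of_deriv_nonpos (convex_Ici 0) hfc.continuousOn
      (fun x hx => (hd x hx).differentiableAt.differentiableWithinAt)
      (fun x hx => le_of_eq ((hd x hx).deriv))
  intro t ht
  exact le_antisymm (h2 (Set.mem_Ici.2 le_rfl) (Set.mem_Ici.2 ht) ht)
    (h1 (Set.mem_Ici.2 le_rfl) (Set.mem_Ici.2 ht) ht)

theorem stmt_13
    (K r τ : ℝ) (hK : 0 < K) (hr : 0 < r) (hτ : 0 < τ)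
    (m p q u : ℝ → ℝ)
    (hmc : Continuous m) (hpc : Continuous p) (hqc : Continuous q) (huc : Continuous u)
    (hdm : ∀ t : ℝ, 0 ≤ t →
      HasDerivAt m (-(r / K) * m t * u t + 2 * (r / K) * m (t - τ) * u (t - τ)) t)
    (hdp : ∀ t : ℝ, 0 ≤ t →
      HasDerivAt p ((r / K) * m t * u t - (r / K) * m (t - τ) * u (t - τ)) t)
    (hdq : ∀ t : ℝ, 0 ≤ t →
      HasDerivAt q ((r / K) * m t * u t - (r / K) * m (t - τ) * u (t - τ)) t)
    (hdu : ∀ t : ℝ, 0 ≤ t → HasDerivAt u (-(r / K) * m t * u t) t)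
    (hmnn : ∀ θ ∈ Set.Icc (-τ) (0 : ℝ), 0 ≤ m θ)
    (hpnn : ∀ θ ∈ Set.Icc (-τ) (0 : ℝ), 0 ≤ p θ)
    (hqnn : ∀ θ ∈ Set.Icc (-τ) (0 : ℝ), 0 ≤ q θ)
    (hunn : ∀ θ ∈ Set.Icc (-τ) (0 : ℝ), 0 ≤ u θ)
    (hsum : m 0 + p 0 + q 0 + u 0 = K)
    (hpin : p 0 = (r / K) * ∫ s in (-τ)..(0 : ℝ), m s * u s)
    (hqin : q 0 = (r / K) * ∫ s in (-τ)..(0 : ℝ), m s * u s)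
    (hmpos : 0 < m 0)
:
    Filter.Tendsto u Filter.atTop (nhds 0) := by
  have hc : 0 < r / K := div_pos hr hK
  set c := r / K with hcdef
  have hmu : Continuous fun s => m s * u s := hmc.mul huc
  set G : ℝ → ℝ := fun t => ∫ s in (0:ℝ)..t, m s * u s with hGdef
  set Im : ℝ → ℝ := fun t => ∫ s in (0:ℝ)..t, m s with hImdef
  set Ju : ℝ → ℝ := fun t => ∫ s in (0:ℝ)..t, u s with hJudef
  have hG : ∀ b, HasDerivAt G (m b * u b) b := my_ftc hmu
  have hIm : ∀ b, HasDerivAt Im (m b) b := my_ftc hmc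
  have hJu : ∀ b, HasDerivAt Ju (u b) b := my_ftc huc
  have hGc : Continuous G := continuous_iff_continuousAt.2 fun x => (hG x).continuousAt
  have hImc : Continuous Im := continuous_iff_continuousAt.2 fun x => (hIm x).continuousAt
  have hJuc : Continuous Ju := continuous_iff_continuousAt.2 fun x => (hJu x).continuousAt
  have hG0 : G 0 = 0 := intervalIntegral.integral_same
  have hIm0 : Im 0 = 0 := intervalIntegral.integral_same
  have hJu0 : Ju 0 = 0 := intervalIntegral.integral_same
  have hu0 : 0 ≤ u 0 := hunn 0 ⟨by linarith, le_rfl⟩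
  have hp0 : 0 ≤ p 0 := hpnn 0 ⟨by linarith, le_rfl⟩
  -- u(t) ≥ 0 for t ≥ 0
  have hφ : ∀ t, 0 ≤ t → u t * Real.exp (c * Im t) = u 0 := by
    have hcont : Continuous fun t => u t * Real.exp (c * Im t) :=
      huc.mul (Real.continuous_exp.comp (continuous_const.mul hImc))
    have hder : ∀ t, 0 ≤ t → HasDerivAt (fun t => u t * Real.exp (c * Im t)) 0 t := by
      intro t ht
      have h1 := (hdu t ht).mul (((hIm t).const_mul c).exp)
      exact h1.congr_deriv (by ring)
    intro t ht
    have h := my_const hcont hder t ht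
    simpa [hIm0] using h
  have hun : ∀ t, 0 ≤ t → 0 ≤ u t := by
    intro t ht
    have h := hφ t ht
    have he := Real.exp_pos (c * Im t)
    nlinarith
  -- m(t) > 0 for t ≥ 0
  have hmpos' : ∀ t, 0 ≤ t → 0 < m t := by
    by_contra hcon
    push_neg at hcon
    obtain ⟨t₁, ht₁, hm₁⟩ := hcon
    set S : Set ℝ := {t | 0 ≤ t ∧ m t ≤ 0} with hSdef
    have hSne : S.Nonempty := ⟨t₁, ht₁, hm₁⟩
    have hSbd : BddBelow S := ⟨0, fun x hx => hx.1⟩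
    have hSc : IsClosed S := by
      have hse : S = Set.Ici 0 ∩ m ⁻¹' Set.Iic 0 := by
        ext x; simp [hSdef, Set.mem_Ici, Set.mem_Iic]
      rw [hse]; exact isClosed_Ici.inter (isClosed_Iic.preimage hmc)
    set t₀ := sInf S with ht₀def
    have ht₀S : t₀ ∈ S := hSc.csInf_mem hSne hSbd
    have hlt : ∀ s, 0 ≤ s → s < t₀ → 0 < m s := by
      intro s hs hst
      by_contra hms
      push_neg at hms
      exact absurd (csInf_le hSbd ⟨hs, hms⟩) (not_le.2 hst)
    set ψ : ℝ → ℝ := fun t => m t * Real.exp (c * Ju t) with hψdef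
    have hψd : ∀ x, 0 ≤ x →
        HasDerivAt ψ (Real.exp (c * Ju x) * (2 * c * (m (x - τ) * u (x - τ)))) x := by
      intro x hx
      have h1 := (hdm x hx).mul (((hJu x).const_mul c).exp)
      exact h1.congr_deriv (by ring)
    have hψc : Continuous ψ := hmc.mul (Real.continuous_exp.comp (continuous_const.mul hJuc))
    have hmono : MonotoneOn ψ (Set.Icc 0 t₀) := by
      apply monotoneOn_of_deriv_nonneg (convex_Icc 0 t₀) hψc.continuousOn
      · intro x hx
        rw [interior_Icc] at hx
        exact ((hψd x hx.1.le).differentiableAt).differentiableWithinAt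
      · intro x hx
        rw [interior_Icc] at hx
        rw [(hψd x hx.1.le).deriv]
        have hτd : 0 ≤ m (x - τ) * u (x - τ) := by
          rcases lt_or_ge (x - τ) 0 with h | h
          · exact mul_nonneg (hmnn _ ⟨by linarith [hx.1], h.le⟩)
              (hunn _ ⟨by linarith [hx.1], h.le⟩)
          · exact mul_nonneg (hlt _ h (by linarith [hx.2])).le (hun _ h)
        exact mul_nonneg (Real.exp_pos _).le
          (mul_nonneg (by nlinarith) hτd)
    have h01 : ψ 0 ≤ ψ t₀ := hmono ⟨le_rfl, ht₀S.1⟩ ⟨ht₀S.1, le_rfl⟩ ht₀S.1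
    have hψ0 : ψ 0 = m 0 := by simp [hψdef, hJu0]
    have hψt : ψ t₀ ≤ 0 :=
      mul_nonpos_of_nonpos_of_nonneg ht₀S.2 (Real.exp_pos _).le
    rw [hψ0] at h01
    linarith
  -- u is antitone on [0,∞)
  have huanti : AntitoneOn u (Set.Ici 0) := by
    apply antitoneOn_of_deriv_nonpos (convex_Ici 0) huc.continuousOn
    · intro x hx; rw [interior_Ici] at hx
      exact ((hdu x hx.le).differentiableAt).differentiableWithinAt
    · intro x hx; rw [interior_Ici] at hx
      rw [(hdu x hx.le).deriv]
      have h1 := mul_nonneg (hmpos' x hx.le).le (hun x hx.le)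
      nlinarith
  -- key identity: c * G t = u 0 - u t
  have hkey : ∀ t, 0 ≤ t → c * G t = u 0 - u t := by
    intro t ht
    have hderiv : ∀ x ∈ Set.uIcc 0 t, HasDerivAt u (-c * m x * u x) x := by
      intro x hx
      rw [Set.uIcc_of_le ht] at hx
      exact hdu x hx.1
    have hint : IntervalIntegrable (fun x => -c * m x * u x) MeasureTheory.volume 0 t :=
      ((continuous_const.mul hmc).mul huc).intervalIntegrable _ _
    have h := intervalIntegral.integral_eq_sub_of_hasDerivAt hderiv hint
    have h2 : (∫ x in (0:ℝ)..t, -c * m x * u x) = -c * G t := by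
      rw [hGdef]
      rw [← intervalIntegral.integral_const_mul]
      exact intervalIntegral.integral_congr fun x _ => by ring
    rw [h2] at h
    linarith
  have hGbound : ∀ t, 0 ≤ t → G t ≤ u 0 / c := by
    intro t ht
    rw [le_div_iff₀ hc]
    have := hkey t ht
    have := hun t ht
    nlinarith
  have hGmono : MonotoneOn G (Set.Ici 0) := by
    intro s hs t ht hst
    have h1 := hkey s hs
    have h2 := hkey t ht
    have h3 := huanti hs ht hst
    nlinarith
  -- limit of u
  set f : ℝ → ℝ := fun t => u (max t 0) with hfdef
  have hfanti : Antitone f := fun a b hab =>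
    huanti (Set.mem_Ici.2 (le_max_right a 0)) (Set.mem_Ici.2 (le_max_right b 0))
      (max_le_max hab le_rfl)
  have hfbdd : BddBelow (Set.range f) := by
    refine ⟨0, ?_⟩
    rintro x ⟨t, rfl⟩
    exact hun _ (le_max_right _ _)
  set L := ⨅ t, f t with hLdef
  have hfL : Tendsto f atTop (𝓝 L) := tendsto_atTop_ciInf hfanti hfbdd
  have huL : Tendsto u atTop (𝓝 L) := by
    apply hfL.congr'
    filter_upwards [eventually_ge_atTop (0:ℝ)] with t ht
    simp [hfdef, max_eq_left ht]
  have hL0 : 0 ≤ L := le_ciInf fun t => hun _ (le_max_right _ _)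
  have hLle : ∀ t, 0 ≤ t → L ≤ u t := by
    intro t ht
    have h := ciInf_le hfbdd t
    simpa [hfdef, max_eq_left ht] using h
  rcases eq_or_lt_of_le hL0 with hL | hL
  · exact hL ▸ huL
  · exfalso
    -- conservation law
    have hwc : Continuous fun t => m t + u t + 2 * c * (G t - G (t - τ)) := by
      apply (hmc.add huc).add
      exact continuous_const.mul (hGc.sub (hGc.comp (continuous_id.sub continuous_const)))
    have hwd : ∀ t, 0 ≤ t →
        HasDerivAt (fun t => m t + u t + 2 * c * (G t - G (t - τ))) 0 t := by
      intro t ht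
      have hGτ : HasDerivAt (fun s => G (s - τ)) (m (t - τ) * u (t - τ)) t := by
        have h2 := (hG (t - τ)).comp t ((hasDerivAt_id t).sub_const τ)
        exact h2.congr_deriv (mul_one _)
      have h := ((hdm t ht).add (hdu t ht)).add (((hG t).sub hGτ).const_mul (2 * c))
      exact h.congr_deriv (by ring)
    have hGneg : G (0 - τ) = -∫ s in (-τ)..(0:ℝ), m s * u s := by
      rw [show (0:ℝ) - τ = -τ by ring, hGdef]
      exact intervalIntegral.integral_symm (-τ) 0
    have hwconst : ∀ t, 0 ≤ t →
        m t + u t + 2 * c * (G t - G (t - τ)) = m 0 + u 0 + 2 * p 0 := by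
      intro t ht
      have h := my_const hwc hwd t ht
      rw [h, hG0, hGneg, hpin]
      ring
    -- limit of G
    set g : ℝ → ℝ := fun t => G (max t 0) with hgdef
    have hgmono : Monotone g := fun a b hab =>
      hGmono (Set.mem_Ici.2 (le_max_right a 0)) (Set.mem_Ici.2 (le_max_right b 0))
        (max_le_max hab le_rfl)
    have hgbdd : BddAbove (Set.range g) := by
      refine ⟨u 0 / c, ?_⟩
      rintro x ⟨t, rfl⟩
      exact hGbound _ (le_max_right _ _)
    set A := ⨆ t, g t with hAdef
    have hgA : Tendsto g atTop (𝓝 A) := tendsto_atTop_ciSup hgmono hgbdd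
    have hGA : Tendsto G atTop (𝓝 A) := by
      apply hgA.congr'
      filter_upwards [eventually_ge_atTop (0:ℝ)] with t ht
      simp [hgdef, max_eq_left ht]
    have hGAτ : Tendsto (fun t => G (t - τ)) atTop (𝓝 A) := by
      have h1 : Tendsto (fun t : ℝ => t - τ) atTop atTop := by
        simpa [sub_eq_add_neg] using tendsto_atTop_add_const_right atTop (-τ) tendsto_id
      exact hGA.comp h1
    -- limit of m
    set M := m 0 + u 0 + 2 * p 0 - L with hMdef
    have hmlim : Tendsto m atTop (𝓝 M) := by
      have h1 : Tendsto (fun t => m 0 + u 0 + 2 * p 0 - u t - 2 * c * (G t - G (t - τ)))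
          atTop (𝓝 (m 0 + u 0 + 2 * p 0 - L - 2 * c * (A - A))) :=
        (tendsto_const_nhds.sub huL).sub ((hGA.sub hGAτ).const_mul (2 * c))
      rw [sub_self, mul_zero, sub_zero] at h1
      apply h1.congr'
      filter_upwards [eventually_ge_atTop (0:ℝ)] with t ht
      have h2 := hwconst t ht
      linarith
    have hM0 : 0 ≤ M := by
      apply ge_of_tendsto hmlim
      filter_upwards [eventually_ge_atTop (0:ℝ)] with t ht
      exact (hmpos' t ht).le
    rcases eq_or_lt_of_le hM0 with hM | hM
    · have hLu : L ≤ u 0 := hLle 0 le_rfl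
      rw [hMdef] at hM
      linarith
    · -- M > 0 : integral of m blows up
      have hMne : M ≠ 0 := ne_of_gt hM
      have hImb : ∀ t, 0 ≤ t → Im t ≤ u 0 / (c * L) := by
        intro t ht
        have h1 : L * Im t ≤ G t := by
          have h2 : (∫ s in (0:ℝ)..t, L * m s) ≤ ∫ s in (0:ℝ)..t, m s * u s := by
            apply intervalIntegral.integral_mono_on ht
              ((continuous_const.mul hmc).intervalIntegrable _ _)
              (hmu.intervalIntegrable _ _)
            intro x hx
            have h3 := hLle x hx.1
            have h4 := (hmpos' x hx.1).le
            show L * m x ≤ m x * u x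
            nlinarith
          rwa [intervalIntegral.integral_const_mul] at h2
        have h2 := hkey t ht
        have h3 := hun t ht
        rw [le_div_iff₀ (by positivity)]
        nlinarith [mul_le_mul_of_nonneg_left h1 hc.le]
      have hev : ∀ᶠ t in atTop, M / 2 ≤ m t :=
        hmlim.eventually (eventually_ge_nhds (by linarith))
      obtain ⟨T, hT⟩ := eventually_atTop.1 hev
      set T' := max T 0 with hT'def
      have hT'0 : 0 ≤ T' := le_max_right _ _
      set B := u 0 / (c * L) with hBdef
      set d := B - Im T' + 1 with hddef
      have hd : 0 < d := by
        have := hImb T' hT'0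
        rw [hddef]
        linarith
      set t2 := T' + 2 * d / M with ht2def
      have ht2 : T' ≤ t2 := by
        rw [ht2def]
        have : 0 ≤ 2 * d / M := by positivity
        linarith
      have ht20 : 0 ≤ t2 := le_trans hT'0 ht2
      have hadd : Im T' + (∫ s in T'..t2, m s) = Im t2 :=
        intervalIntegral.integral_add_adjacent_intervals
          (hmc.intervalIntegrable 0 T') (hmc.intervalIntegrable T' t2)
      have hlow : (t2 - T') * (M / 2) ≤ ∫ s in T'..t2, m s := by
        have h := intervalIntegral.integral_mono_on ht2
          (intervalIntegrable_const (μ := MeasureTheory.volume) (c := M / 2))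
          (hmc.intervalIntegrable T' t2)
          (fun x hx => hT x (le_trans (le_max_left T 0) hx.1))
        rwa [intervalIntegral.integral_const, smul_eq_mul] at h
      have heq : (t2 - T') * (M / 2) = d := by
        rw [ht2def]
        field_simp
        ring
      have hfin := hImb t2 ht20
      rw [heq] at hlow
      rw [hddef] at hlow
      linarith
end

section
/- Reduction of Theorem 1 from the key step: under the feasibility conditions, if u(t) → 0 as t → ∞ and m(t)u(t) → 0 as t → ∞, then m(t) → K, p(t) → 0 and q(t) → 0 as t → ∞. -/
open Filter

theorem stmt_14
    (K r τ : ℝ) (hK : 0 < K) (hr : 0 < r) (hτ : 0 < τ)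
    (m p q u : ℝ → ℝ)
    (hmc : Continuous m) (hpc : Continuous p) (hqc : Continuous q) (huc : Continuous u)
    (hdm : ∀ t : ℝ, 0 ≤ t →
      HasDerivAt m (-(r / K) * m t * u t + 2 * (r / K) * m (t - τ) * u (t - τ)) t)
    (hdp : ∀ t : ℝ, 0 ≤ t →
      HasDerivAt p ((r / K) * m t * u t - (r / K) * m (t - τ) * u (t - τ)) t)
    (hdq : ∀ t : ℝ, 0 ≤ t →
      HasDerivAt q ((r / K) * m t * u t - (r / K) * m (t - τ) * u (t - τ)) t)
    (hdu : ∀ t : ℝ, 0 ≤ t → HasDerivAt u (-(r / K) * m t * u t) t)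
    (hmnn : ∀ θ ∈ Set.Icc (-τ) (0 : ℝ), 0 ≤ m θ)
    (hpnn : ∀ θ ∈ Set.Icc (-τ) (0 : ℝ), 0 ≤ p θ)
    (hqnn : ∀ θ ∈ Set.Icc (-τ) (0 : ℝ), 0 ≤ q θ)
    (hunn : ∀ θ ∈ Set.Icc (-τ) (0 : ℝ), 0 ≤ u θ)
    (hsum : m 0 + p 0 + q 0 + u 0 = K)
    (hpin : p 0 = (r / K) * ∫ s in (-τ)..(0 : ℝ), m s * u s)
    (hqin : q 0 = (r / K) * ∫ s in (-τ)..(0 : ℝ), m s * u s)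
    (hulim : Filter.Tendsto u Filter.atTop (nhds 0))
    (hmulim : Filter.Tendsto (fun t => m t * u t) Filter.atTop (nhds 0))
:
    Filter.Tendsto m Filter.atTop (nhds K) ∧ Filter.Tendsto p Filter.atTop (nhds 0) ∧
    Filter.Tendsto q Filter.atTop (nhds 0) := by
  have hc : 0 < r / K := div_pos hr hK
  have hmu : Continuous (fun s => m s * u s) := hmc.mul huc
  -- constancy helper
  have const_of : ∀ (f : ℝ → ℝ), Continuous f → (∀ t : ℝ, 0 ≤ t → HasDerivAt f 0 t) →
      ∀ t : ℝ, 0 ≤ t → f t = f 0 := by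
    intro f hfc hfd t ht
    exact constant_of_has_deriv_right_zero (f := f) (a := 0) (b := t) hfc.continuousOn
      (fun x hx => (hfd x hx.1).hasDerivWithinAt) t (Set.right_mem_Icc.mpr ht)
  -- primitive
  set G : ℝ → ℝ := fun t => ∫ s in (0:ℝ)..t, m s * u s with hGdef
  have hGd : ∀ t : ℝ, HasDerivAt G (m t * u t) t := by
    intro t
    exact intervalIntegral.integral_hasDerivAt_right (hmu.intervalIntegrable 0 t)
      (hmu.stronglyMeasurableAtFilter _ _) hmu.continuousAt
  have hGc : Continuous G := continuous_iff_continuousAt.mpr fun t => (hGd t).continuousAt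
  have hGτ : ∀ t : ℝ, HasDerivAt (fun s => G (s - τ)) (m (t - τ) * u (t - τ)) t := by
    intro t
    have := (hGd (t - τ)).comp t ((hasDerivAt_id t).sub_const τ)
    simpa [Function.comp_def] using this
  -- p representation
  have key : ∀ (f : ℝ → ℝ), Continuous f →
      (∀ t : ℝ, 0 ≤ t → HasDerivAt f ((r / K) * m t * u t - (r / K) * m (t - τ) * u (t - τ)) t) →
      f 0 = (r / K) * ∫ s in (-τ)..(0 : ℝ), m s * u s →
      ∀ t : ℝ, 0 ≤ t → f t = (r / K) * (G t - G (t - τ)) := by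
    intro f hfc hfd hf0 t ht
    have h1 : ∀ s : ℝ, 0 ≤ s →
        HasDerivAt (fun x => f x - (r / K) * (G x - G (x - τ))) 0 s := by
      intro s hs
      have := (hfd s hs).sub ((((hGd s).sub (hGτ s)).const_mul (r / K)))
      exact this.congr_deriv (by ring)
    have h2 : Continuous (fun x => f x - (r / K) * (G x - G (x - τ))) :=
      hfc.sub (continuous_const.mul (hGc.sub (hGc.comp (continuous_id.sub continuous_const))))
    have h3 := const_of _ h2 h1 t ht
    have hG0 : G 0 = 0 := intervalIntegral.integral_same
    have hGmτ : G (-τ) = -∫ s in (-τ)..(0:ℝ), m s * u s :=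
      intervalIntegral.integral_symm (-τ) 0
    have : f 0 - (r / K) * (G 0 - G (0 - τ)) = 0 := by
      have h0 : (0:ℝ) - τ = -τ := by ring
      rw [hf0, hG0, h0, hGmτ]
      ring
    rw [this] at h3
    linarith [h3]
  have hpeq := key p hpc hdp hpin
  have hqeq := key q hqc hdq hqin
  -- the difference is a small integral
  have hint : ∀ t : ℝ, G t - G (t - τ) = ∫ s in (t - τ)..t, m s * u s := by
    intro t
    have h := intervalIntegral.integral_add_adjacent_intervals (a := 0) (b := t - τ) (c := t)
      (μ := MeasureTheory.volume) (hmu.intervalIntegrable 0 (t - τ)) (hmu.intervalIntegrable (t - τ) t)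
    show (∫ s in (0:ℝ)..t, m s * u s) - ∫ s in (0:ℝ)..(t-τ), m s * u s = _
    linarith [h]
  -- limit of such integrals
  have hlim : ∀ (f : ℝ → ℝ), (∀ t : ℝ, 0 ≤ t → f t = (r / K) * (G t - G (t - τ))) →
      Tendsto f atTop (nhds 0) := by
    intro f hf
    rw [Metric.tendsto_atTop]
    intro ε hε
    have hε' : 0 < ε / (2 * (r / K) * τ) := by positivity
    rw [Metric.tendsto_atTop] at hmulim
    obtain ⟨N, hN⟩ := hmulim _ hε'
    refine ⟨max (N + τ) τ, fun t ht => ?_⟩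
    have ht1 : N + τ ≤ t := le_trans (le_max_left _ _) ht
    have ht2 : τ ≤ t := le_trans (le_max_right _ _) ht
    have ht0 : 0 ≤ t := le_trans hτ.le ht2
    rw [hf t ht0, hint t]
    have hbound : ‖∫ s in (t - τ)..t, m s * u s‖ ≤ (ε / (2 * (r / K) * τ)) * |t - (t - τ)| := by
      apply intervalIntegral.norm_integral_le_of_norm_le_const
      intro x hx
      rw [Set.uIoc_of_le (by linarith)] at hx
      have hxN : N ≤ x := le_trans (by linarith) hx.1.le
      have := hN x hxN
      rw [Real.dist_eq, sub_zero] at this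
      exact this.le
    have habs : |t - (t - τ)| = τ := by rw [abs_of_nonneg (by linarith)]; ring
    rw [habs] at hbound
    rw [Real.dist_eq, sub_zero, abs_mul, abs_of_pos hc]
    calc (r / K) * |∫ s in (t - τ)..t, m s * u s| ≤ (r / K) * ((ε / (2 * (r / K) * τ)) * τ) := by
          exact mul_le_mul_of_nonneg_left hbound hc.le
      _ = ε / 2 := by field_simp
      _ < ε := by linarith
  have hp : Tendsto p atTop (nhds 0) := hlim p hpeq
  have hq : Tendsto q atTop (nhds 0) := hlim q hqeq
  -- conservation
  have hS : ∀ t : ℝ, 0 ≤ t → m t + p t + q t + u t = K := by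
    intro t ht
    have h1 : ∀ s : ℝ, 0 ≤ s → HasDerivAt (fun x => m x + p x + q x + u x) 0 s := by
      intro s hs
      have := (((hdm s hs).add (hdp s hs)).add (hdq s hs)).add (hdu s hs)
      exact this.congr_deriv (by ring)
    have h2 : Continuous (fun x => m x + p x + q x + u x) :=
      ((hmc.add hpc).add hqc).add huc
    have := const_of _ h2 h1 t ht
    rw [this, hsum]
  have hm : Tendsto m atTop (nhds K) := by
    have heq : ∀ᶠ t in atTop, K - p t - q t - u t = m t := by
      filter_upwards [eventually_ge_atTop (0:ℝ)] with t ht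
      have := hS t ht
      linarith
    have h4 : Tendsto (fun t => K - p t - q t - u t) atTop (nhds (K - 0 - 0 - 0)) :=
      (((tendsto_const_nhds : Tendsto (fun _ : ℝ => K) atTop (nhds K)).sub hp).sub hq).sub hulim
    have h5 : Tendsto (fun t => K - p t - q t - u t) atTop (nhds K) := by
      simpa using h4
    exact h5.congr' heq
  exact ⟨hm, hp, hq⟩
end

section
/- Characterization of feasible equilibria: suppose m, p, q, u are constant functions satisfying the delay differential system and the feasibility conditions. Then either (m, p, q, u) ≡ (K, 0, 0, 0) or (m, p, q, u) ≡ (0, 0, 0, K). -/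
theorem stmt_16
    (K r τ : ℝ) (hK : 0 < K) (hr : 0 < r) (hτ : 0 < τ)
    (m p q u : ℝ → ℝ)
    (hmc : Continuous m) (hpc : Continuous p) (hqc : Continuous q) (huc : Continuous u)
    (hdm : ∀ t : ℝ, 0 ≤ t →
      HasDerivAt m (-(r / K) * m t * u t + 2 * (r / K) * m (t - τ) * u (t - τ)) t)
    (hdp : ∀ t : ℝ, 0 ≤ t →
      HasDerivAt p ((r / K) * m t * u t - (r / K) * m (t - τ) * u (t - τ)) t)
    (hdq : ∀ t : ℝ, 0 ≤ t →
      HasDerivAt q ((r / K) * m t * u t - (r / K) * m (t - τ) * u (t - τ)) t)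
    (hdu : ∀ t : ℝ, 0 ≤ t → HasDerivAt u (-(r / K) * m t * u t) t)
    (hmnn : ∀ θ ∈ Set.Icc (-τ) (0 : ℝ), 0 ≤ m θ)
    (hpnn : ∀ θ ∈ Set.Icc (-τ) (0 : ℝ), 0 ≤ p θ)
    (hqnn : ∀ θ ∈ Set.Icc (-τ) (0 : ℝ), 0 ≤ q θ)
    (hunn : ∀ θ ∈ Set.Icc (-τ) (0 : ℝ), 0 ≤ u θ)
    (hsum : m 0 + p 0 + q 0 + u 0 = K)
    (hpin : p 0 = (r / K) * ∫ s in (-τ)..(0 : ℝ), m s * u s)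
    (hqin : q 0 = (r / K) * ∫ s in (-τ)..(0 : ℝ), m s * u s)
    (hmconst : ∀ t : ℝ, m t = m 0) (hpconst : ∀ t : ℝ, p t = p 0)
    (hqconst : ∀ t : ℝ, q t = q 0) (huconst : ∀ t : ℝ, u t = u 0)
:
    (∀ t : ℝ, m t = K ∧ p t = 0 ∧ q t = 0 ∧ u t = 0) ∨
    (∀ t : ℝ, m t = 0 ∧ p t = 0 ∧ q t = 0 ∧ u t = K) := by
  have hrK : r / K ≠ 0 := by positivity
  have hueq : u = fun _ => u 0 := funext huconst
  have hu0 : HasDerivAt u 0 0 := by rw [hueq]; exact hasDerivAt_const _ _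
  have hmu : m 0 * u 0 = 0 := by
    have := (hdu 0 le_rfl).unique hu0
    have : (r / K) * (m 0 * u 0) = 0 := by linarith [this]
    exact (mul_eq_zero.1 this).resolve_left hrK
  have hint : (∫ s in (-τ)..(0 : ℝ), m s * u s) = 0 := by
    have : (fun s => m s * u s) = fun _ => (0:ℝ) := by
      funext s; rw [hmconst s, huconst s, hmu]
    rw [this]; simp
  have hp0 : p 0 = 0 := by rw [hpin, hint, mul_zero]
  have hq0 : q 0 = 0 := by rw [hqin, hint, mul_zero]
  have hmu0 : m 0 + u 0 = K := by linarith
  rcases mul_eq_zero.1 hmu with h | h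
  · right; intro t
    rw [hmconst t, hpconst t, hqconst t, huconst t, hp0, hq0, h]
    refine ⟨rfl, rfl, rfl, by linarith⟩
  · left; intro t
    rw [hmconst t, hpconst t, hqconst t, huconst t, hp0, hq0, h]
    refine ⟨by linarith, rfl, rfl, rfl⟩
end

section
/- Convergence of the empty-site count: under the feasibility conditions, u(t) converges to a limit L ∈ [0, u(0)] as t → ∞, and the integral ∫_{0}^{∞} m(s)u(s) ds is finite. -/
open Set Filter MeasureTheory intervalIntegral Real Topology

theorem stmt_19
    (K r τ : ℝ) (hK : 0 < K) (hr : 0 < r) (hτ : 0 < τ)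
    (m p q u : ℝ → ℝ)
    (hmc : Continuous m) (hpc : Continuous p) (hqc : Continuous q) (huc : Continuous u)
    (hdm : ∀ t : ℝ, 0 ≤ t →
      HasDerivAt m (-(r / K) * m t * u t + 2 * (r / K) * m (t - τ) * u (t - τ)) t)
    (hdp : ∀ t : ℝ, 0 ≤ t →
      HasDerivAt p ((r / K) * m t * u t - (r / K) * m (t - τ) * u (t - τ)) t)
    (hdq : ∀ t : ℝ, 0 ≤ t →
      HasDerivAt q ((r / K) * m t * u t - (r / K) * m (t - τ) * u (t - τ)) t)
    (hdu : ∀ t : ℝ, 0 ≤ t → HasDerivAt u (-(r / K) * m t * u t) t)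
    (hmnn : ∀ θ ∈ Set.Icc (-τ) (0 : ℝ), 0 ≤ m θ)
    (hpnn : ∀ θ ∈ Set.Icc (-τ) (0 : ℝ), 0 ≤ p θ)
    (hqnn : ∀ θ ∈ Set.Icc (-τ) (0 : ℝ), 0 ≤ q θ)
    (hunn : ∀ θ ∈ Set.Icc (-τ) (0 : ℝ), 0 ≤ u θ)
    (hsum : m 0 + p 0 + q 0 + u 0 = K)
    (hpin : p 0 = (r / K) * ∫ s in (-τ)..(0 : ℝ), m s * u s)
    (hqin : q 0 = (r / K) * ∫ s in (-τ)..(0 : ℝ), m s * u s)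
:
    (∃ L ∈ Set.Icc (0 : ℝ) (u 0), Filter.Tendsto u Filter.atTop (nhds L)) ∧
    MeasureTheory.IntegrableOn (fun s => m s * u s) (Set.Ici (0 : ℝ)) := by
  set c := r / K with hc
  have hc0 : 0 < c := div_pos hr hK
  -- derivative of primitives
  have prim : ∀ (f : ℝ → ℝ), Continuous f → ∀ t : ℝ,
      HasDerivAt (fun x => ∫ s in (0:ℝ)..x, f s) (f t) t := fun f hf t =>
    intervalIntegral.integral_hasDerivAt_right (hf.intervalIntegrable _ _)
      (hf.stronglyMeasurableAtFilter _ _) hf.continuousAt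
  have primc : ∀ (f : ℝ → ℝ), Continuous f →
      Continuous (fun x => ∫ s in (0:ℝ)..x, f s) := fun f hf =>
    intervalIntegral.continuous_primitive (fun a b => hf.intervalIntegrable a b) 0
  -- the u-formula: u t * exp (c * ∫₀ᵗ m) is constant on [0, ∞)
  set E : ℝ → ℝ := fun x => ∫ s in (0:ℝ)..x, m s with hE
  set v : ℝ → ℝ := fun x => u x * Real.exp (c * E x) with hv
  have hvd : ∀ t : ℝ, 0 ≤ t → HasDerivAt v 0 t := by
    intro t ht
    have h1 : HasDerivAt (fun x => Real.exp (c * E x)) (Real.exp (c * E t) * (c * m t)) t :=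
      (((prim m hmc t).const_mul c).exp)
    have h2 := (hdu t ht).mul h1
    refine HasDerivAt.congr_deriv h2 ?_
    ring
  have hvconst : ∀ t : ℝ, 0 ≤ t → v t = v 0 := by
    intro t ht
    have hcont : ContinuousOn v (Icc 0 t) :=
      (huc.mul ((continuous_const.mul (primc m hmc)).rexp)).continuousOn
    exact constant_of_has_deriv_right_zero hcont
      (fun x hx => (hvd x hx.1).hasDerivWithinAt) t ⟨ht, le_refl t⟩
  have hv0 : v 0 = u 0 := by
    simp [hv, hE, intervalIntegral.integral_same]
  have hu0nn : 0 ≤ u 0 := hunn 0 ⟨neg_nonpos.2 hτ.le, le_refl 0⟩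
  have hu_nn : ∀ t : ℝ, -τ ≤ t → 0 ≤ u t := by
    intro t ht
    rcases le_or_gt t 0 with h | h
    · exact hunn t ⟨ht, h⟩
    · have := hvconst t h.le
      rw [hv0] at this
      have hexp : 0 < Real.exp (c * E t) := Real.exp_pos _
      have hvt : u t * Real.exp (c * E t) = u 0 := by simpa [hv] using this
      by_contra hneg
      push_neg at hneg
      nlinarith [hvt, hexp, hu0nn]
  -- nonnegativity of m via step method
  set F : ℝ → ℝ := fun x => ∫ s in (0:ℝ)..x, u s with hF
  set w : ℝ → ℝ := fun x => m x * Real.exp (c * F x) with hw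
  have hwd : ∀ t : ℝ, 0 ≤ t →
      HasDerivAt w (Real.exp (c * F t) * (2 * c * m (t - τ) * u (t - τ))) t := by
    intro t ht
    have h1 : HasDerivAt (fun x => Real.exp (c * F x)) (Real.exp (c * F t) * (c * u t)) t :=
      (((prim u huc t).const_mul c).exp)
    have h2 := (hdm t ht).mul h1
    refine HasDerivAt.congr_deriv h2 ?_
    ring
  have hwc : Continuous w := hmc.mul ((continuous_const.mul (primc u huc)).rexp)
  have hw0 : w 0 = m 0 := by simp [hw, hF, intervalIntegral.integral_same]
  have hm0nn : 0 ≤ m 0 := hmnn 0 ⟨neg_nonpos.2 hτ.le, le_refl 0⟩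
  have hm_step : ∀ n : ℕ, ∀ t : ℝ, -τ ≤ t → t ≤ n * τ → 0 ≤ m t := by
    intro n
    induction n with
    | zero => intro t ht ht'; exact hmnn t ⟨ht, by simpa using ht'⟩
    | succ n ih =>
      intro t ht ht'
      rcases le_or_gt t 0 with h | h
      · exact hmnn t ⟨ht, h⟩
      · have hmono : MonotoneOn w (Icc 0 ((n + 1 : ℕ) * τ)) := by
          apply monotoneOn_of_deriv_nonneg (convex_Icc _ _) hwc.continuousOn
          · intro x hx
            rw [interior_Icc] at hx
            exact ((hwd x hx.1.le).differentiableAt).differentiableWithinAt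
          · intro x hx
            rw [interior_Icc] at hx
            rw [(hwd x hx.1.le).deriv]
            have hx1 : -τ ≤ x - τ := by linarith [hx.1]
            have hx2 : x - τ ≤ n * τ := by
              have := hx.2
              push_cast at this ⊢
              linarith
            have hmx : 0 ≤ m (x - τ) := ih _ hx1 hx2
            have hux : 0 ≤ u (x - τ) := hu_nn _ hx1
            positivity
        have ht0 : (0:ℝ) ∈ Icc (0:ℝ) ((n + 1 : ℕ) * τ) := by
          constructor
          · exact le_refl _
          · positivity
        have htt : t ∈ Icc (0:ℝ) ((n + 1 : ℕ) * τ) := ⟨h.le, ht'⟩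
        have := hmono ht0 htt h.le
        rw [hw0] at this
        have hexp : 0 < Real.exp (c * F t) := Real.exp_pos _
        have hwt : 0 ≤ w t := le_trans hm0nn this
        simp only [hw] at hwt
        nlinarith [hwt, hexp]
  have hm_nn : ∀ t : ℝ, -τ ≤ t → 0 ≤ m t := by
    intro t ht
    obtain ⟨n, hn⟩ := exists_nat_ge (t / τ)
    exact hm_step n t ht (by rw [div_le_iff₀ hτ] at hn; linarith)
  -- u is antitone on [0, ∞)
  have hu_anti : AntitoneOn u (Ici (0:ℝ)) := by
    apply antitoneOn_of_deriv_nonpos (convex_Ici _) huc.continuousOn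
    · intro x hx
      rw [interior_Ici] at hx
      exact ((hdu x hx.le).differentiableAt).differentiableWithinAt
    · intro x hx
      rw [interior_Ici] at hx
      have hx0 : (0:ℝ) < x := hx
      rw [(hdu x hx.le).deriv]
      have h1 : 0 ≤ m x := hm_nn x (by linarith)
      have h2 : 0 ≤ u x := hu_nn x (by linarith)
      nlinarith [mul_nonneg (mul_nonneg hc0.le h1) h2]
  constructor
  · -- convergence
    set f : ℝ → ℝ := fun t => u (max t 0) with hf
    have hfa : Antitone f := by
      intro s t hst
      exact hu_anti (le_max_right s 0) (le_max_right t 0)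
        (max_le_max hst (le_refl 0))
    have hfb : BddBelow (range f) := by
      refine ⟨0, ?_⟩
      rintro x ⟨t, rfl⟩
      exact hu_nn _ (le_trans (neg_nonpos.2 hτ.le) (le_max_right t 0))
    refine ⟨⨅ t, f t, ⟨?_, ?_⟩, ?_⟩
    · exact le_ciInf fun t => hu_nn _ (le_trans (neg_nonpos.2 hτ.le) (le_max_right t 0))
    · have := ciInf_le hfb 0
      simpa [hf] using this
    · have hlim : Tendsto f atTop (𝓝 (⨅ t, f t)) := tendsto_atTop_ciInf hfa hfb
      have hev : f =ᶠ[atTop] u := by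
        filter_upwards [eventually_ge_atTop (0:ℝ)] with t ht
        simp [hf, max_eq_left ht]
      exact Filter.Tendsto.congr' hev hlim
  · -- integrability
    have key : ∀ T : ℝ, 0 ≤ T → ∫ s in (0:ℝ)..T, m s * u s ≤ u 0 / c := by
      intro T hT
      have hftc : ∫ s in (0:ℝ)..T, (-c * m s * u s) = u T - u 0 := by
        apply intervalIntegral.integral_eq_sub_of_hasDerivAt
        · intro x hx
          rw [uIcc_of_le hT] at hx
          exact hdu x hx.1
        · exact ((continuous_const.mul hmc).mul huc).intervalIntegrable _ _
      have h2 : ∫ s in (0:ℝ)..T, (-c * m s * u s) = -c * ∫ s in (0:ℝ)..T, m s * u s := by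
        rw [← intervalIntegral.integral_const_mul]
        congr 1; ext s; ring
      have h3 : -c * ∫ s in (0:ℝ)..T, m s * u s = u T - u 0 := by rw [← h2]; exact hftc
      have h4 : 0 ≤ u T := hu_nn T (by linarith)
      rw [le_div_iff₀ hc0]
      nlinarith [h3, h4]
    rw [integrableOn_Ici_iff_integrableOn_Ioi]
    apply integrableOn_Ioi_of_intervalIntegral_norm_bounded (u 0 / c) 0
      (fun i : ℝ => ((hmc.mul huc).intervalIntegrable 0 i).1) tendsto_id
    filter_upwards [eventually_ge_atTop (0:ℝ)] with i hi
    have heq : ∫ x in (0:ℝ)..i, ‖m x * u x‖ = ∫ x in (0:ℝ)..i, m x * u x := by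
      apply intervalIntegral.integral_congr
      intro s hs
      rw [uIcc_of_le hi] at hs
      have h1 : 0 ≤ m s := hm_nn s (by linarith [hs.1])
      have h2 : 0 ≤ u s := hu_nn s (by linarith [hs.1])
      simp [abs_of_nonneg h1, abs_of_nonneg h2]
    change ∫ x in (0:ℝ)..i, ‖m x * u x‖ ≤ u 0 / c
    rw [heq]
    exact key i hi
end
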